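/- arXiv:math/0212220 — 6 statements merged into one kernel-verified Lean document; each statement's English description precedes it below -/
import Mathlib

section
/- For all integers a and d ≥ 1 one has δ(a,d) = (φ(gcd(a,d))/gcd(a,d)) · Σ_{r ≥ 1, gcd(1+ra,d)=1} Σ_{m ≥ 1, gcd(m,d)=1} μ(m)/(m·r·φ(m·r·d)). -/
open ArithmeticFunction in
private lemma sum_moebius_div_eq (n : ℕ) (hn : 0 < n) :
    ∑ e ∈ n.divisors, (moebius e : ℝ) / e = (Nat.totient n : ℝ) / n := by
  have h := (ArithmeticFunction.sum_eq_iff_sum_mul_moebius_eq (R := ℝ)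
      (f := fun i => (Nat.totient i : ℝ)) (g := fun i => (i : ℝ))).mp
      (fun k hk => by exact_mod_cast congrArg (Nat.cast : ℕ → ℝ) (Nat.sum_totient k)) n hn
  rw [Nat.sum_divisorsAntidiagonal (f := fun x y => (moebius x : ℝ) * (y : ℝ))] at h
  rw [eq_div_iff (by positivity : (n : ℝ) ≠ 0), ← h, Finset.sum_mul]
  refine Finset.sum_congr rfl fun e he => ?_
  obtain ⟨hed, hn0⟩ := Nat.mem_divisors.mp he
  have he0 : (e : ℝ) ≠ 0 := Nat.cast_ne_zero.mpr fun h' => by simp [h'] at hed; omega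
  rw [Nat.cast_div hed he0]
  field_simp

open ArithmeticFunction in
private lemma inner_eq (a : ℤ) (d : ℕ) (hd : 1 ≤ d) (r : ℕ) (hr : 1 ≤ r) :
    (∑' m : ℕ, if 1 ≤ m ∧ ((Nat.gcd m d : ℤ) ∣ a) then
        (moebius m : ℝ) / ((m : ℝ) * (r : ℝ) * (Nat.totient (r * Nat.lcm m d) : ℝ)) else 0) =
      ((Nat.totient (Int.gcd a d) : ℝ) / (Int.gcd a d : ℝ)) *
        ∑' m : ℕ, if 1 ≤ m ∧ Nat.gcd m d = 1 then
          (moebius m : ℝ) / ((m : ℝ) * (r : ℝ) * (Nat.totient (m * r * d) : ℝ)) else 0 := by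
  set g : ℕ := Int.gcd a d with hgdef
  have hd0 : d ≠ 0 := by omega
  have hg0 : g ≠ 0 := fun h => hd0 (by exact_mod_cast (Int.gcd_eq_zero_iff.mp h).2)
  have hgd : g ∣ d := Int.natCast_dvd_natCast.mp (by simpa using Int.gcd_dvd_right (a := a) (b := (d : ℤ)))
  have hga : (g : ℤ) ∣ a := Int.gcd_dvd_left a d
  set F : ℕ → ℝ := fun m => if 1 ≤ m ∧ ((Nat.gcd m d : ℤ) ∣ a) then
      (moebius m : ℝ) / ((m : ℝ) * (r : ℝ) * (Nat.totient (r * Nat.lcm m d) : ℝ)) else 0 with hF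
  set H : ℕ → ℝ := fun m => if 1 ≤ m ∧ Nat.gcd m d = 1 then
      (moebius m : ℝ) / ((m : ℝ) * (r : ℝ) * (Nat.totient (m * r * d) : ℝ)) else 0 with hHdef
  set c : ℕ → ℝ := fun e => if e ∈ g.divisors then (moebius e : ℝ) / e else 0 with hcdef
  set G : ℕ × ℕ → ℝ := fun p => c p.1 * H p.2 with hGdef
  have hcne : ∀ {e : ℕ}, c e ≠ 0 → e ∣ g ∧ Squarefree e ∧ 0 < e := by
    intro e h
    by_cases hmem : e ∈ g.divisors
    · obtain ⟨hdvd, -⟩ := Nat.mem_divisors.mp hmem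
      refine ⟨hdvd, ?_, Nat.pos_of_ne_zero fun h0 => hg0 (by simpa [h0, zero_dvd_iff] using hdvd)⟩
      rw [← moebius_ne_zero_iff_squarefree]
      intro h0
      exact h (by rw [hcdef]; simp only [if_pos hmem, h0]; simp)
    · exact absurd (by rw [hcdef]; exact if_neg hmem) h
  have hHne : ∀ {m : ℕ}, H m ≠ 0 → 1 ≤ m ∧ Nat.Coprime m d ∧ Squarefree m := by
    intro m h
    by_cases hmem : 1 ≤ m ∧ Nat.gcd m d = 1
    · refine ⟨hmem.1, hmem.2, ?_⟩
      rw [← moebius_ne_zero_iff_squarefree]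
      intro h0
      exact h (by simp [hHdef, h0])
    · exact absurd (by simp only [hHdef]; exact if_neg hmem) h
  have hgcdkey : ∀ {e m : ℕ}, e ∣ g → Nat.Coprime m d → Nat.gcd (e * m) d = e :=
    fun {e m} heg hcop => by
      rw [hcop.gcd_mul_right_cancel e, Nat.gcd_eq_left (heg.trans hgd)]
  have stepA : (∑' m, F m) = ∑' p, G p := by
    apply tsum_eq_tsum_of_ne_zero_bij (i := fun p => p.1.1 * p.1.2)
    · rintro ⟨⟨e₁, m₁⟩, h₁⟩ ⟨⟨e₂, m₂⟩, h₂⟩ hprod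
      simp only at hprod
      obtain ⟨hc₁, hH₁⟩ := mul_ne_zero_iff.mp h₁
      obtain ⟨hc₂, hH₂⟩ := mul_ne_zero_iff.mp h₂
      dsimp only at hc₁ hH₁ hc₂ hH₂
      obtain ⟨heg₁, -, he₁⟩ := hcne hc₁
      obtain ⟨heg₂, -, he₂⟩ := hcne hc₂
      obtain ⟨hm₁, hcop₁, -⟩ := hHne hH₁
      obtain ⟨hm₂, hcop₂, -⟩ := hHne hH₂
      have he : e₁ = e₂ := by
        rw [← hgcdkey heg₁ hcop₁, ← hgcdkey heg₂ hcop₂, hprod]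
      subst he
      have hm : m₁ = m₂ := Nat.eq_of_mul_eq_mul_left he₁ hprod
      simp [hm]
    · rintro m hm
      rw [Function.mem_support, hF] at hm
      have hcond : 1 ≤ m ∧ ((Nat.gcd m d : ℤ) ∣ a) := by
        by_contra h; exact hm (if_neg h)
      have hμ : moebius m ≠ 0 := by
        intro h0; exact hm (by simp [h0])
      have hsq : Squarefree m := moebius_ne_zero_iff_squarefree.mp hμ
      set e := Nat.gcd m d with hedef
      have hem : e ∣ m := Nat.gcd_dvd_left m d
      have hed : e ∣ d := Nat.gcd_dvd_right m d
      have he0 : 0 < e := Nat.gcd_pos_of_pos_left d hcond.1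
      set m' := m / e with hm'def
      have hmm : e * m' = m := Nat.mul_div_cancel' hem
      have hm'm : m' ∣ m := ⟨e, by rw [← hmm]; ring⟩
      have hm'sq : Squarefree m' := hsq.squarefree_of_dvd hm'm
      have hm'0 : 1 ≤ m' := Nat.pos_of_ne_zero fun h0 => by
        rw [h0, mul_zero] at hmm; omega
      have hcop : Nat.Coprime m' d := by
        have hkd : Nat.gcd m' d ∣ e := Nat.dvd_gcd ((Nat.gcd_dvd_left m' d).trans hm'm)
          (Nat.gcd_dvd_right m' d)
        have hsqd : Nat.gcd m' d * Nat.gcd m' d ∣ m := by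
          rw [← hmm]; exact mul_dvd_mul hkd (Nat.gcd_dvd_left m' d)
        exact Nat.isUnit_iff.mp (hsq _ hsqd)
      have heg : e ∣ g := by
        exact Int.dvd_gcd hcond.2 (Int.natCast_dvd_natCast.mpr hed)
      have hesq : Squarefree e := hsq.squarefree_of_dvd hem
      have hce : c e ≠ 0 := by
        rw [hcdef]
        simp only [Nat.mem_divisors, heg, hg0, ne_eq, not_false_iff, and_true, if_true,
          if_pos (⟨heg, hg0⟩ : e ∣ g ∧ g ≠ 0)]
        exact div_ne_zero (by exact_mod_cast moebius_ne_zero_iff_squarefree.mpr hesq)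
          (Nat.cast_ne_zero.mpr he0.ne')
      have hHe : H m' ≠ 0 := by
        rw [hHdef]
        simp only [if_pos (⟨hm'0, hcop⟩ : 1 ≤ m' ∧ Nat.gcd m' d = 1)]
        apply div_ne_zero
        · exact_mod_cast moebius_ne_zero_iff_squarefree.mpr hm'sq
        · have h1 : 0 < m' * r * d := by positivity
          have h2 : 0 < Nat.totient (m' * r * d) := Nat.totient_pos.mpr h1
          positivity
      exact ⟨⟨(e, m'), mul_ne_zero hce hHe⟩, hmm⟩
    · rintro ⟨⟨e, m'⟩, hp⟩
      rw [Function.mem_support] at hp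
      obtain ⟨hce, hHe⟩ := mul_ne_zero_iff.mp hp
      dsimp only at hce hHe
      obtain ⟨heg, hesq, he0⟩ := hcne hce
      obtain ⟨hm'0, hcop, hm'sq⟩ := hHne hHe
      have hed : e ∣ d := heg.trans hgd
      have hgcd : Nat.gcd (e * m') d = e := hgcdkey heg hcop
      have hea : (e : ℤ) ∣ a := (Int.natCast_dvd_natCast.mpr heg).trans hga
      have hlcm : Nat.lcm (e * m') d = m' * d := by
        have h1 : Nat.gcd (e * m') d * Nat.lcm (e * m') d = e * m' * d := Nat.gcd_mul_lcm _ _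
        rw [hgcd] at h1
        exact Nat.eq_of_mul_eq_mul_left he0 (by rw [h1]; ring)
      have hcopem : Nat.Coprime e m' := Nat.Coprime.coprime_dvd_left hed hcop.symm
      have hcond1 : 1 ≤ e * m' ∧ ((Nat.gcd (e * m') d : ℤ) ∣ a) :=
        ⟨Nat.one_le_iff_ne_zero.mpr (Nat.mul_ne_zero he0.ne' (Nat.one_le_iff_ne_zero.mp hm'0)),
          by rw [hgcd]; exact hea⟩
      show F (e * m') = c e * H m'
      simp only [hF, hHdef, hcdef]
      rw [if_pos hcond1, if_pos (⟨hm'0, hcop⟩ : 1 ≤ m' ∧ Nat.gcd m' d = 1),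
        if_pos (Nat.mem_divisors.mpr ⟨heg, hg0⟩)]
      rw [hlcm, show r * (m' * d) = m' * r * d by ring,
        isMultiplicative_moebius.map_mul_of_coprime hcopem, div_mul_div_comm]
      congr 1
      · push_cast; ring
      · push_cast; ring
  rw [stepA]
  by_cases hHs : Summable H
  · have hcfin : (Function.support c).Finite := by
      apply Set.Finite.subset (g.divisors : Finset ℕ).finite_toSet
      intro e he
      rw [Function.mem_support] at he
      by_contra hmem
      rw [Finset.mem_coe] at hmem
      exact he (by rw [hcdef]; exact if_neg hmem)
    have hcS : Summable c := summable_of_finite_support hcfin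
    have hG : Summable G := by
      apply summable_mul_of_summable_norm (f := c) (g := H)
      · simpa [Real.norm_eq_abs, summable_abs_iff] using hcS
      · simpa [Real.norm_eq_abs, summable_abs_iff] using hHs
    rw [hG.tsum_prod' (fun b => hG.comp_injective (fun x y hxy => by simpa using hxy))]
    have hslice : ∀ e : ℕ, (∑' m, G (e, m)) = c e * ∑' m, H m := fun e => by
      simp only [hGdef]; exact tsum_mul_left
    rw [tsum_congr hslice,
      tsum_eq_sum (s := g.divisors)
        (fun e he => by rw [show c e = 0 from by rw [hcdef]; exact if_neg he, zero_mul]),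
      ← Finset.sum_mul]
    congr 1
    rw [← sum_moebius_div_eq g (Nat.pos_of_ne_zero hg0)]
    exact Finset.sum_congr rfl fun e he => (by rw [hcdef]; exact if_pos he : c e = _)
  · have hGns : ¬ Summable G := by
      intro hG
      apply hHs
      have hs := hG.comp_injective (i := fun m : ℕ => ((1 : ℕ), m))
        (fun x y hxy => by simpa using hxy)
      have hs' : Summable (fun m : ℕ => c 1 * H m) := hs
      have hc1 : c 1 = 1 := by
        rw [hcdef]; simp [Nat.mem_divisors, Nat.one_dvd, hg0]
      simpa [hc1] using hs'
    rw [tsum_eq_zero_of_not_summable hGns, tsum_eq_zero_of_not_summable hHs, mul_zero]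

/-- The double series `δ(a,d)`: the average over primes `p` of the density of elements
of `𝔽_p^*` whose multiplicative order is `≡ a (mod d)`. -/
noncomputable def deltaDensity (a : ℤ) (d : ℕ) : ℝ :=
  ∑' r : ℕ, ∑' m : ℕ,
    if 1 ≤ r ∧ 1 ≤ m ∧ Int.gcd (1 + (r : ℤ) * a) d = 1 ∧ ((Nat.gcd m d : ℤ) ∣ a) then
      (ArithmeticFunction.moebius m : ℝ) /
        ((m : ℝ) * (r : ℝ) * (Nat.totient (r * Nat.lcm m d) : ℝ))
    else 0

/-- `δ(a,d) = (φ(gcd(a,d))/gcd(a,d)) · Σ_{r ≥ 1, gcd(1+ra,d)=1} Σ_{m ≥ 1, gcd(m,d)=1}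
μ(m)/(m·r·φ(m·r·d))`. -/
theorem deltaDensity_eq (a : ℤ) (d : ℕ) (hd : 1 ≤ d) :
    deltaDensity a d =
      ((Nat.totient (Int.gcd a d) : ℝ) / (Int.gcd a d : ℝ)) *
        ∑' r : ℕ, ∑' m : ℕ,
          if 1 ≤ r ∧ 1 ≤ m ∧ Int.gcd (1 + (r : ℤ) * a) d = 1 ∧ Nat.gcd m d = 1 then
            (ArithmeticFunction.moebius m : ℝ) /
              ((m : ℝ) * (r : ℝ) * (Nat.totient (m * r * d) : ℝ))
          else 0 := by
  rw [deltaDensity, ← tsum_mul_left]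
  refine tsum_congr fun r => ?_
  by_cases hr : 1 ≤ r ∧ Int.gcd (1 + (r : ℤ) * a) d = 1
  · obtain ⟨hr1, hr2⟩ := hr
    have l1 : ∀ m : ℕ, (1 ≤ r ∧ 1 ≤ m ∧ Int.gcd (1 + (r : ℤ) * a) d = 1 ∧
        ((Nat.gcd m d : ℤ) ∣ a)) ↔ (1 ≤ m ∧ ((Nat.gcd m d : ℤ) ∣ a)) := fun m => by tauto
    have l2 : ∀ m : ℕ, (1 ≤ r ∧ 1 ≤ m ∧ Int.gcd (1 + (r : ℤ) * a) d = 1 ∧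
        Nat.gcd m d = 1) ↔ (1 ≤ m ∧ Nat.gcd m d = 1) := fun m => by tauto
    simp only [l1, l2]
    exact inner_eq a d hd r hr1
  · rw [tsum_congr (fun m => if_neg (fun hc => hr ⟨hc.1, hc.2.2.1⟩)),
      tsum_congr (fun m => if_neg (fun hc => hr ⟨hc.1, hc.2.2.1⟩)), tsum_zero, mul_zero]
end

section
/- Let a be an integer and d, d₁ positive integers with d | d₁ and γ(d₁) = γ(d), where γ(n) = Π_{p | n} p denotes the squarefree kernel of n. Then δ(a,d₁) = (d/d₁)·δ(a,d). -/
/-- The squarefree kernel `γ(n) = Π_{p | n} p`. -/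
def kernel (n : ℕ) : ℕ := ∏ p ∈ n.primeFactors, p

/-- If every prime factor of `e` divides `n`, then `φ(e·n) = e·φ(n)`. -/
lemma totient_mul_of_primeFactors_subset :
    ∀ e : ℕ, e ≠ 0 → ∀ n : ℕ, e.primeFactors ⊆ n.primeFactors →
      (e * n).totient = e * n.totient := by
  intro e
  induction e using Nat.strong_induction_on with
  | _ e ih =>
    intro he n hsub
    rcases eq_or_ne e 1 with rfl | he1
    · simp
    · obtain ⟨p, pp, pdvd⟩ := Nat.exists_prime_and_dvd he1
      obtain ⟨e', rfl⟩ := pdvd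
      have he' : e' ≠ 0 := by rintro rfl; simp at he
      have hpn : p ∣ n :=
        Nat.dvd_of_mem_primeFactors
          (hsub (Nat.mem_primeFactors.mpr ⟨pp, ⟨e', rfl⟩, he⟩))
      have hlt : e' < p * e' := by
        have h1 := pp.one_lt
        have h2 := Nat.pos_of_ne_zero he'
        nlinarith
      have hsub' : e'.primeFactors ⊆ n.primeFactors :=
        (Nat.primeFactors_mono (Dvd.intro_left p rfl) he).trans hsub
      calc (p * e' * n).totient = (p * (e' * n)).totient := by ring_nf
        _ = p * (e' * n).totient :=
            Nat.totient_mul_of_prime_of_dvd pp (hpn.mul_left e')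
        _ = p * (e' * n.totient) := by rw [ih e' hlt he' n hsub']
        _ = p * e' * n.totient := by ring

/-- If `d | d₁` and `γ(d₁) = γ(d)`, then `δ(a,d₁) = (d/d₁)·δ(a,d)`. -/
theorem deltaDensity_of_dvd_of_kernel_eq (a : ℤ) (d d₁ : ℕ) (hd : 0 < d) (hd₁ : 0 < d₁)
    (hdvd : d ∣ d₁) (hker : kernel d₁ = kernel d) :
    deltaDensity a d₁ = ((d : ℝ) / (d₁ : ℝ)) * deltaDensity a d := by
  set e := d₁ / d with hedef
  have hde : d₁ = d * e := (Nat.mul_div_cancel' hdvd).symm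
  have he0 : e ≠ 0 := by
    rintro h
    rw [h, mul_zero] at hde
    omega
  -- the prime factors of d and d₁ coincide
  have hpf : d₁.primeFactors = d.primeFactors := by
    apply subset_antisymm
    · intro p hp
      have hp' := Nat.prime_of_mem_primeFactors hp
      have h1 : p ∣ kernel d₁ := Finset.dvd_prod_of_mem (fun q => q) hp
      rw [hker] at h1
      have h2 : p ∣ d := h1.trans (Nat.prod_primeFactors_dvd d)
      exact Nat.mem_primeFactors.mpr ⟨hp', h2, hd.ne'⟩
    · exact Nat.primeFactors_mono hdvd hd₁.ne'
  -- coprimality to d and to d₁ is the same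
  have hcop : ∀ k : ℕ, k.Coprime d ↔ k.Coprime d₁ := by
    intro k
    constructor
    · intro h
      by_contra hc
      obtain ⟨p, pp, pk, pd1⟩ := Nat.Prime.not_coprime_iff_dvd.mp hc
      have hpd : p ∣ d :=
        Nat.dvd_of_mem_primeFactors
          (hpf ▸ Nat.mem_primeFactors.mpr ⟨pp, pd1, hd₁.ne'⟩)
      have h1 : p ∣ Nat.gcd k d := Nat.dvd_gcd pk hpd
      rw [h] at h1
      exact pp.ne_one (Nat.dvd_one.mp h1)
    · exact fun h => Nat.Coprime.coprime_dvd_right hdvd h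
  unfold deltaDensity
  rw [← tsum_mul_left]
  apply tsum_congr
  intro r
  rw [← tsum_mul_left]
  apply tsum_congr
  intro m
  by_cases hsf : Squarefree m
  · -- for squarefree m the gcd's with d and d₁ agree
    have hm0 : m ≠ 0 := hsf.ne_zero
    have hg : Nat.gcd m d₁ = Nat.gcd m d := by
      apply Nat.dvd_antisymm
      · -- gcd m d₁ is squarefree, hence divides kernel d₁ = kernel d ∣ d
        have hsq : Squarefree (Nat.gcd m d₁) := hsf.squarefree_of_dvd (Nat.gcd_dvd_left m d₁)
        have h1 : (Nat.gcd m d₁).primeFactors ⊆ d₁.primeFactors :=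
          Nat.primeFactors_mono (Nat.gcd_dvd_right m d₁) hd₁.ne'
        have h2 : Nat.gcd m d₁ ∣ kernel d₁ := by
          conv_lhs => rw [← Nat.prod_primeFactors_of_squarefree hsq]
          exact Finset.prod_dvd_prod_of_subset _ _ _ h1
        have h3 : Nat.gcd m d₁ ∣ d := by
          rw [hker] at h2
          exact h2.trans (Nat.prod_primeFactors_dvd d)
        exact Nat.dvd_gcd (Nat.gcd_dvd_left m d₁) h3
      · exact Nat.dvd_gcd (Nat.gcd_dvd_left m d) ((Nat.gcd_dvd_right m d).trans hdvd)
    have hgcdint : Int.gcd (1 + (r : ℤ) * a) d₁ = 1 ↔ Int.gcd (1 + (r : ℤ) * a) d = 1 := by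
      have h1 : Int.gcd (1 + (r : ℤ) * a) d₁ = Nat.gcd (1 + (r : ℤ) * a).natAbs d₁ := by
        simp [Int.gcd, Int.natAbs_natCast]
      have h2 : Int.gcd (1 + (r : ℤ) * a) d = Nat.gcd (1 + (r : ℤ) * a).natAbs d := by
        simp [Int.gcd, Int.natAbs_natCast]
      rw [h1, h2]
      exact (hcop (1 + (r : ℤ) * a).natAbs).symm
    have hcond : (1 ≤ r ∧ 1 ≤ m ∧ Int.gcd (1 + (r : ℤ) * a) d₁ = 1 ∧
          ((Nat.gcd m d₁ : ℤ) ∣ a)) ↔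
        (1 ≤ r ∧ 1 ≤ m ∧ Int.gcd (1 + (r : ℤ) * a) d = 1 ∧ ((Nat.gcd m d : ℤ) ∣ a)) := by
      rw [hg, hgcdint]
    by_cases h : 1 ≤ r ∧ 1 ≤ m ∧ Int.gcd (1 + (r : ℤ) * a) d = 1 ∧ ((Nat.gcd m d : ℤ) ∣ a)
    · rw [if_pos (hcond.mpr h), if_pos h]
      obtain ⟨hr, hm, -, -⟩ := h
      -- lcm(m, d₁) = e * lcm(m, d)
      have hgl1 := Nat.gcd_mul_lcm m d₁
      have hgl2 := Nat.gcd_mul_lcm m d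
      rw [hg] at hgl1
      have hgpos : 0 < Nat.gcd m d := Nat.gcd_pos_of_pos_right m hd
      have hlcm : Nat.lcm m d₁ = e * Nat.lcm m d := by
        apply Nat.eq_of_mul_eq_mul_left hgpos
        rw [hgl1, hde]
        calc m * (d * e) = (m * d) * e := by ring
          _ = (Nat.gcd m d * Nat.lcm m d) * e := by rw [hgl2]
          _ = Nat.gcd m d * (e * Nat.lcm m d) := by ring
      have hLpos : 0 < Nat.lcm m d := Nat.pos_of_ne_zero (Nat.lcm_ne_zero hm0 hd.ne')
      have hrLpos : 0 < r * Nat.lcm m d := Nat.mul_pos hr hLpos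
      have htot : (r * Nat.lcm m d₁).totient = e * (r * Nat.lcm m d).totient := by
        rw [hlcm, show r * (e * Nat.lcm m d) = e * (r * Nat.lcm m d) by ring]
        apply totient_mul_of_primeFactors_subset e he0
        have h1 : e.primeFactors ⊆ d.primeFactors := by
          rw [← hpf]
          exact Nat.primeFactors_mono (Dvd.intro_left d hde.symm) hd₁.ne'
        have h2 : d.primeFactors ⊆ (r * Nat.lcm m d).primeFactors :=
          Nat.primeFactors_mono ((Nat.dvd_lcm_right m d).trans (Dvd.intro_left r rfl))
            hrLpos.ne'
        exact h1.trans h2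
      rw [htot]
      have hTpos : 0 < (r * Nat.lcm m d).totient := Nat.totient_pos.mpr hrLpos
      have hd1R : (d₁ : ℝ) = (d : ℝ) * (e : ℝ) := by exact_mod_cast congrArg Nat.cast hde
      have hmR : (m : ℝ) ≠ 0 := Nat.cast_ne_zero.mpr hm0
      have hrR : (r : ℝ) ≠ 0 := Nat.cast_ne_zero.mpr (by omega)
      have heR : (e : ℝ) ≠ 0 := Nat.cast_ne_zero.mpr he0
      have hdR : (d : ℝ) ≠ 0 := Nat.cast_ne_zero.mpr hd.ne'
      have hTR : ((r * Nat.lcm m d).totient : ℝ) ≠ 0 := Nat.cast_ne_zero.mpr hTpos.ne'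
      rw [hd1R]
      push_cast
      field_simp
    · rw [if_neg (fun hc => h (hcond.mp hc)), if_neg h, mul_zero]
  · have hμ : ArithmeticFunction.moebius m = 0 :=
      ArithmeticFunction.moebius_eq_zero_of_not_squarefree hsf
    split_ifs <;> simp [hμ]
end

section
/- For every integer d ≥ 1 one has ρ(0,d) = 1/(d·φ(d)). Moreover ρ(d,2d) = ρ(0,2d) if d is odd, and ρ(d,2d) = 3·ρ(0,2d) if d is even. -/
/-- Artin's constant `A = Π_p (1 - 1/(p(p-1)))`. -/
noncomputable def artinConst : ℝ :=
  ∏' p : Nat.Primes, (1 - 1 / (((p : ℕ) : ℝ) * (((p : ℕ) : ℝ) - 1)))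

/-- `r(t) = (1/t²)·Π_{p | t} (p²−1)/(p²−p−1)`. -/
noncomputable def rFun (t : ℕ) : ℝ :=
  (1 / (t : ℝ) ^ 2) *
    ∏ p ∈ t.primeFactors, (((p : ℝ) ^ 2 - 1) / ((p : ℝ) ^ 2 - (p : ℝ) - 1))

/-- `ρ(a,d) = A · Σ_{t ≥ 1, t ≡ a (mod d)} r(t)`: the average over primes `p` of the
density of elements of `𝔽_p^*` whose index is `≡ a (mod d)`. -/
noncomputable def rhoDensity (a : ℤ) (d : ℕ) : ℝ :=
  artinConst * ∑' t : ℕ, if 1 ≤ t ∧ (t : ℤ) ≡ a [ZMOD (d : ℤ)] then rFun t else 0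

noncomputable def cFac (p : ℕ) : ℝ := ((p : ℝ) ^ 2 - 1) / ((p : ℝ) ^ 2 - (p : ℝ) - 1)

lemma rFun_def (t : ℕ) : rFun t = (1 / (t : ℝ) ^ 2) * ∏ p ∈ t.primeFactors, cFac p := rfl

lemma den_pos {p : ℕ} (hp : 2 ≤ p) : 0 < (p : ℝ) ^ 2 - (p : ℝ) - 1 := by
  have : (2 : ℝ) ≤ (p : ℕ) := by exact_mod_cast hp
  nlinarith

lemma one_le_cFac {p : ℕ} (hp : 2 ≤ p) : 1 ≤ cFac p := by
  have h := den_pos hp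
  have : (2 : ℝ) ≤ (p : ℕ) := by exact_mod_cast hp
  rw [cFac, le_div_iff₀ h]; nlinarith

lemma cFac_nonneg {p : ℕ} (hp : 2 ≤ p) : 0 ≤ cFac p := le_trans zero_le_one (one_le_cFac hp)

lemma cFac_le_three {p : ℕ} (hp : 2 ≤ p) : cFac p ≤ 3 := by
  have h := den_pos hp
  have : (2 : ℝ) ≤ (p : ℕ) := by exact_mod_cast hp
  rw [cFac, div_le_iff₀ h]; nlinarith

lemma cFac_le_43 {p : ℕ} (hp : 5 ≤ p) : cFac p ≤ 4 / 3 := by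
  have h2 : (2:ℕ) ≤ p := by omega
  have h := den_pos h2
  have : (5 : ℝ) ≤ (p : ℕ) := by exact_mod_cast hp
  rw [cFac, div_le_iff₀ h]; nlinarith

lemma cFac_two : cFac 2 = 3 := by norm_num [cFac]

lemma rFun_zero : rFun 0 = 0 := by simp [rFun]

lemma rFun_one : rFun 1 = 1 := by simp [rFun]

lemma rFun_nonneg (t : ℕ) : 0 ≤ rFun t := by
  rw [rFun_def]
  refine mul_nonneg (by positivity) (Finset.prod_nonneg fun p hp => ?_)
  exact cFac_nonneg (Nat.prime_of_mem_primeFactors hp).two_le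

lemma rFun_mul {m n : ℕ} (h : Nat.Coprime m n) : rFun (m * n) = rFun m * rFun n := by
  rcases Nat.eq_zero_or_pos m with rfl | hm
  · rw [Nat.coprime_zero_left] at h; subst h; simp [rFun_zero, rFun_one]
  rcases Nat.eq_zero_or_pos n with rfl | hn
  · rw [Nat.coprime_zero_right] at h; subst h; simp [rFun_zero, rFun_one]
  rw [rFun_def, rFun_def, rFun_def,
    Nat.primeFactors_mul hm.ne' hn.ne',
    Finset.prod_union (Nat.Coprime.disjoint_primeFactors h)]
  push_cast
  rw [mul_pow]
  field_simp

lemma rFun_prime_pow {p k : ℕ} (hp : p.Prime) (hk : k ≠ 0) :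
    rFun (p ^ k) = cFac p * (((p : ℝ) ^ 2)⁻¹) ^ k := by
  rw [rFun_def, Nat.primeFactors_pow _ hk, hp.primeFactors, Finset.prod_singleton]
  push_cast
  rw [one_div, ← pow_mul, inv_pow, ← pow_mul, mul_comm k 2]
  ring

lemma cFac_eq (p : ℕ) : cFac p = ((p : ℝ) ^ 2 - 1) / ((p : ℝ) ^ 2 - (p : ℝ) - 1) := rfl

lemma prod_cFac_le {t : ℕ} (ht : t ≠ 0) :
    ∏ p ∈ t.primeFactors, cFac p ≤ 9 * (t : ℝ) ^ ((1 : ℝ) / 5) := by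
  classical
  set s := t.primeFactors with hs
  have hsub : ∀ p ∈ s, p.Prime := fun p hp => Nat.prime_of_mem_primeFactors hp
  rw [← Finset.prod_filter_mul_prod_filter_not s (· < 5)]
  have h1 : ∏ p ∈ s.filter (· < 5), cFac p ≤ 9 := by
    have hcard : (s.filter (· < 5)).card ≤ 2 := by
      have : s.filter (· < 5) ⊆ ({2, 3} : Finset ℕ) := by
        intro p hp
        simp only [Finset.mem_filter] at hp
        have hpp := hsub p hp.1
        have h2 := hpp.two_le
        have h5 : p < 5 := hp.2
        interval_cases p
        · simp
        · simp
        · exact absurd hpp (by decide)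
      calc (s.filter (· < 5)).card ≤ ({2,3} : Finset ℕ).card := Finset.card_le_card this
        _ = 2 := rfl
    calc ∏ p ∈ s.filter (· < 5), cFac p ≤ ∏ _p ∈ s.filter (· < 5), (3:ℝ) := by
          apply Finset.prod_le_prod
          · intro p hp
            exact cFac_nonneg (hsub p (Finset.mem_filter.mp hp).1).two_le
          · intro p hp
            exact cFac_le_three (hsub p (Finset.mem_filter.mp hp).1).two_le
      _ = 3 ^ (s.filter (· < 5)).card := Finset.prod_const 3
      _ ≤ 3 ^ 2 := by
          apply pow_le_pow_right₀ (by norm_num) hcard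
      _ = 9 := by norm_num
  have h1nn : (0:ℝ) ≤ ∏ p ∈ s.filter (· < 5), cFac p :=
    Finset.prod_nonneg fun p hp => cFac_nonneg (hsub p (Finset.mem_filter.mp hp).1).two_le
  have h2nn : (0:ℝ) ≤ ∏ p ∈ s.filter (¬ · < 5), cFac p :=
    Finset.prod_nonneg fun p hp => cFac_nonneg (hsub p (Finset.mem_filter.mp hp).1).two_le
  have h5 : (∏ p ∈ s.filter (¬ · < 5), cFac p) ^ 5 ≤ (t : ℝ) := by
    rw [← Finset.prod_pow]
    have key : ∏ p ∈ s.filter (¬ · < 5), (cFac p) ^ 5 ≤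
        ∏ p ∈ s.filter (¬ · < 5), (p : ℝ) := by
      apply Finset.prod_le_prod
      · intro p hp
        exact pow_nonneg (cFac_nonneg (hsub p (Finset.mem_filter.mp hp).1).two_le) 5
      · intro p hp
        obtain ⟨hps, hp5⟩ := Finset.mem_filter.mp hp
        have hp5' : 5 ≤ p := by omega
        calc (cFac p) ^ 5 ≤ (4/3 : ℝ) ^ 5 := by
              apply pow_le_pow_left₀ (cFac_nonneg (hsub p hps).two_le) (cFac_le_43 hp5')
          _ ≤ 5 := by norm_num
          _ ≤ (p : ℝ) := by exact_mod_cast hp5'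
    refine key.trans ?_
    have hdvd : (∏ p ∈ s.filter (¬ · < 5), p) ∣ t := by
      refine dvd_trans (Finset.prod_dvd_prod_of_subset _ _ _ (Finset.filter_subset _ _)) ?_
      exact Nat.prod_primeFactors_dvd t
    have := Nat.le_of_dvd (Nat.pos_of_ne_zero ht) hdvd
    calc ∏ p ∈ s.filter (¬ · < 5), (p:ℝ) = ((∏ p ∈ s.filter (¬ · < 5), p : ℕ) : ℝ) := by
          push_cast; rfl
      _ ≤ (t : ℝ) := by exact_mod_cast this
  have h2 : ∏ p ∈ s.filter (¬ · < 5), cFac p ≤ (t : ℝ) ^ ((1:ℝ)/5) := by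
    have h := Real.rpow_le_rpow (by positivity) h5 (by norm_num : (0:ℝ) ≤ 1/5)
    rwa [← Real.rpow_natCast (∏ p ∈ s.filter (¬ · < 5), cFac p) 5, ← Real.rpow_mul h2nn,
      show ((5:ℕ):ℝ) * (1/5) = 1 by norm_num, Real.rpow_one] at h
  exact mul_le_mul h1 h2 h2nn (by norm_num)

lemma rFun_le (t : ℕ) : rFun t ≤ 9 * (t : ℝ) ^ (-(9 : ℝ)/5) := by
  rcases Nat.eq_zero_or_pos t with rfl | ht
  · rw [rFun_zero, Nat.cast_zero, Real.zero_rpow (by norm_num)]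
    norm_num
  have htR : (0:ℝ) < t := by exact_mod_cast ht
  rw [rFun_def]
  calc (1 / (t : ℝ) ^ 2) * ∏ p ∈ t.primeFactors, cFac p
      ≤ (1 / (t : ℝ) ^ 2) * (9 * (t : ℝ) ^ ((1 : ℝ) / 5)) := by
        apply mul_le_mul_of_nonneg_left (prod_cFac_le ht.ne') (by positivity)
    _ = 9 * (t : ℝ) ^ (-(9 : ℝ)/5) := by
        rw [one_div, ← Real.rpow_natCast (t:ℝ) 2, ← Real.rpow_neg htR.le,
          mul_comm ((t:ℝ) ^ (-((2:ℕ):ℝ))), mul_assoc, ← Real.rpow_add htR]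
        norm_num

lemma summable_rFun : Summable rFun :=
  Summable.of_nonneg_of_le rFun_nonneg rFun_le
    ((Real.summable_nat_rpow.mpr (by norm_num)).mul_left 9)

lemma xFac_nonneg {p : ℕ} (hp : 2 ≤ p) : (0:ℝ) ≤ ((p : ℝ) ^ 2)⁻¹ := by positivity

lemma xFac_lt_one {p : ℕ} (hp : 2 ≤ p) : ((p : ℝ) ^ 2)⁻¹ < 1 := by
  have : (2:ℝ) ≤ (p:ℝ) := by exact_mod_cast hp
  rw [inv_lt_one_iff₀]
  right; nlinarith

lemma summable_rFun_pow {p : ℕ} (hp : p.Prime) : Summable (fun k => rFun (p ^ k)) := by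
  have h2 := hp.two_le
  refine Summable.of_nonneg_of_le (fun k => rFun_nonneg _) ?_
    ((summable_geometric_of_lt_one (xFac_nonneg h2) (xFac_lt_one h2)).mul_left 3)
  intro k
  rcases Nat.eq_zero_or_pos k with rfl | hk
  · simp [rFun_one]
  · rw [rFun_prime_pow hp hk.ne']
    apply mul_le_mul_of_nonneg_right (cFac_le_three h2)
    positivity

lemma pow_mul_inj {p : ℕ} (hp : p.Prime) {k1 w1 k2 w2 : ℕ} (h1 : ¬ p ∣ w1) (h2 : ¬ p ∣ w2)
    (he : p ^ k1 * w1 = p ^ k2 * w2) : k1 = k2 ∧ w1 = w2 := by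
  have hw1 : w1 ≠ 0 := fun h => h1 (h ▸ dvd_zero p)
  have hw2 : w2 ≠ 0 := fun h => h2 (h ▸ dvd_zero p)
  have hk : k1 = k2 := by
    have := congrArg (fun n => n.factorization p) he
    simpa [Nat.factorization_mul (pow_ne_zero _ hp.pos.ne') hw1,
      Nat.factorization_mul (pow_ne_zero _ hp.pos.ne') hw2,
      Nat.Prime.factorization_pow, hp,
      Nat.factorization_eq_zero_of_not_dvd h1,
      Nat.factorization_eq_zero_of_not_dvd h2] using this
  subst hk
  exact ⟨rfl, Nat.eq_of_mul_eq_mul_left (pow_pos hp.pos _) he⟩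

lemma tsum_split {p : ℕ} (hp : p.Prime) (Q R : ℕ → Prop) [DecidablePred Q] [DecidablePred R]
    [∀ t : ℕ, Decidable (∃ k w, Q k ∧ ¬ p ∣ w ∧ R w ∧ t = p ^ k * w)]
    [∀ w : ℕ, Decidable (¬ p ∣ w ∧ R w)] :
    ∑' t : ℕ, (if ∃ k w, Q k ∧ ¬ p ∣ w ∧ R w ∧ t = p ^ k * w then rFun t else 0)
      = (∑' k : ℕ, if Q k then rFun (p ^ k) else 0) *
        (∑' w : ℕ, if ¬ p ∣ w ∧ R w then rFun w else 0) := by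
  classical
  set f : ℕ → ℝ := fun k => if Q k then rFun (p ^ k) else 0 with hf
  set g : ℕ → ℝ := fun w => if ¬ p ∣ w ∧ R w then rFun w else 0 with hg
  have hfs : Summable f := by
    apply Summable.of_nonneg_of_le _ _ (summable_rFun_pow hp)
    · intro k; simp only [hf]; split <;> [exact rFun_nonneg _; exact le_refl 0]
    · intro k; simp only [hf]; split <;> [exact le_refl _; exact rFun_nonneg _]
  have hgs : Summable g := by
    apply Summable.of_nonneg_of_le _ _ summable_rFun
    · intro w; simp only [hg]; split <;> [exact rFun_nonneg _; exact le_refl 0]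
    · intro w; simp only [hg]; split <;> [exact le_refl _; exact rFun_nonneg _]
  have hfnn : ∀ k, 0 ≤ f k := by
    intro k; simp only [hf]; split <;> [exact rFun_nonneg _; exact le_refl 0]
  have hgnn : ∀ w, 0 ≤ g w := by
    intro w; simp only [hg]; split <;> [exact rFun_nonneg _; exact le_refl 0]
  have hF : Summable (fun kw : ℕ × ℕ => f kw.1 * g kw.2) :=
    hfs.mul_of_nonneg hgs hfnn hgnn
  have hcond : ∀ {k w : ℕ}, f k * g w ≠ 0 → Q k ∧ (¬ p ∣ w ∧ R w) := by
    intro k w h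
    rcases mul_ne_zero_iff.mp h with ⟨hfk, hgw⟩
    constructor
    · by_contra hQ; exact hfk (if_neg hQ)
    · by_contra hR; exact hgw (if_neg hR)
  have hRHS : (∑' k, f k) * (∑' w, g w) = ∑' kw : ℕ × ℕ, f kw.1 * g kw.2 := by
    rw [Summable.tsum_prod' hF (fun k => (hgs.mul_left (f k)))]
    calc (∑' k, f k) * (∑' w, g w) = ∑' k, (f k * ∑' w, g w) := (hfs.tsum_mul_right _).symm
      _ = ∑' k, ∑' w, f k * g w := tsum_congr fun k => (hgs.tsum_mul_left (f k)).symm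
  rw [hRHS]
  apply tsum_eq_tsum_of_ne_zero_bij (fun kw => p ^ (kw.1 : ℕ × ℕ).1 * (kw.1 : ℕ × ℕ).2)
  · rintro ⟨⟨k1, w1⟩, hx1⟩ ⟨⟨k2, w2⟩, hx2⟩ he
    have h1 := (hcond hx1).2.1
    have h2 := (hcond hx2).2.1
    have he' : p ^ k1 * w1 = p ^ k2 * w2 := he
    obtain ⟨hk, hw⟩ := pow_mul_inj hp h1 h2 he'
    subst hk; subst hw; rfl
  · intro t ht
    simp only [Function.mem_support, ne_eq, ite_eq_right_iff, not_forall] at ht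
    obtain ⟨⟨k, w, hQ, hpw, hR, rfl⟩, hne⟩ := ht
    have hcop : Nat.Coprime (p ^ k) w := Nat.Coprime.pow_left k (hp.coprime_iff_not_dvd.mpr hpw)
    refine ⟨⟨(k, w), ?_⟩, rfl⟩
    simp only [Function.mem_support, hf, hg, if_pos hQ, if_pos (And.intro hpw hR)]
    rw [← rFun_mul hcop]
    exact hne
  · rintro ⟨⟨k, w⟩, hx⟩
    have hx' : f k * g w ≠ 0 := hx
    obtain ⟨hQ, hRw⟩ := hcond hx'
    have hcop : Nat.Coprime (p ^ k) w := Nat.Coprime.pow_left k (hp.coprime_iff_not_dvd.mpr hRw.1)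
    show (if ∃ k' w', Q k' ∧ ¬ p ∣ w' ∧ R w' ∧ p ^ k * w = p ^ k' * w' then rFun (p ^ k * w) else 0)
      = f k * g w
    rw [if_pos ⟨k, w, hQ, hRw.1, hRw.2, rfl⟩, rFun_mul hcop]
    simp only [hf, hg, if_pos hQ, if_pos hRw]

lemma tsum_geom_shift {x : ℝ} (h0 : 0 ≤ x) (h1 : x < 1) (n : ℕ) :
    ∑' k : ℕ, (if n ≤ k then x ^ k else 0) = x ^ n * (1 - x)⁻¹ := by
  classical
  have hsupp : Function.support (fun k : ℕ => if n ≤ k then x ^ k else 0) ⊆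
      Set.range (fun j : ℕ => n + j) := by
    intro k hk
    have hnk : n ≤ k := by
      by_contra h
      rw [Function.mem_support, if_neg h] at hk
      exact hk rfl
    exact ⟨k - n, by show n + (k - n) = k; omega⟩
  rw [← Function.Injective.tsum_eq (add_right_injective n) hsupp]
  have : ∀ j : ℕ, (if n ≤ n + j then x ^ (n + j) else 0) = x ^ n * x ^ j := by
    intro j; rw [if_pos (Nat.le_add_right n j), pow_add]
  rw [tsum_congr this, tsum_mul_left, tsum_geometric_of_lt_one h0 h1]

lemma tsum_rFun_pow_ge {p : ℕ} (hp : p.Prime) (e : ℕ) :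
    ∑' k : ℕ, (if e + 1 ≤ k then rFun (p ^ k) else 0)
      = cFac p * ((((p : ℝ) ^ 2)⁻¹) ^ (e + 1) * (1 - ((p : ℝ) ^ 2)⁻¹)⁻¹) := by
  classical
  have h2 := hp.two_le
  have : ∀ k : ℕ, (if e + 1 ≤ k then rFun (p ^ k) else 0)
      = cFac p * (if e + 1 ≤ k then (((p : ℝ) ^ 2)⁻¹) ^ k else 0) := by
    intro k
    split
    · next h => rw [rFun_prime_pow hp (by omega)]
    · rw [mul_zero]
  rw [tsum_congr this, tsum_mul_left, tsum_geom_shift (xFac_nonneg h2) (xFac_lt_one h2)]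

lemma tsum_rFun_pow_all {p : ℕ} (hp : p.Prime) :
    ∑' k : ℕ, rFun (p ^ k)
      = 1 + cFac p * (((p : ℝ) ^ 2)⁻¹ * (1 - ((p : ℝ) ^ 2)⁻¹)⁻¹) := by
  classical
  have h2 := hp.two_le
  have hsum := summable_rFun_pow hp
  rw [Summable.tsum_eq_zero_add hsum]
  have h0 : rFun (p ^ 0) = 1 := by rw [pow_zero, rFun_one]
  have : ∀ k : ℕ, rFun (p ^ (k + 1)) = cFac p * (((p : ℝ) ^ 2)⁻¹) * (((p : ℝ) ^ 2)⁻¹) ^ k := by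
    intro k
    rw [rFun_prime_pow hp k.succ_ne_zero, pow_succ, mul_comm ((((p : ℝ) ^ 2)⁻¹) ^ k), mul_assoc]
  rw [h0, tsum_congr this, tsum_mul_left, tsum_geometric_of_lt_one (xFac_nonneg h2) (xFac_lt_one h2)]
  ring

open scoped Classical

noncomputable def Sd (d : ℕ) : ℝ := ∑' t : ℕ, if d ∣ t then rFun t else 0
noncomputable def Wpm (p m : ℕ) : ℝ := ∑' w : ℕ, if ¬ p ∣ w ∧ m ∣ w then rFun w else 0

lemma dvd_iff_exists {p m : ℕ} (hp : p.Prime) (hpm : ¬ p ∣ m) (e t : ℕ) :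
    (p ^ e * m ∣ t ∧ t ≠ 0) ↔ ∃ k w, e ≤ k ∧ ¬ p ∣ w ∧ m ∣ w ∧ t = p ^ k * w := by
  constructor
  · rintro ⟨hdvd, ht⟩
    refine ⟨t.factorization p, t / p ^ t.factorization p, ?_, ?_, ?_, ?_⟩
    · rw [← Nat.Prime.pow_dvd_iff_le_factorization hp ht]
      exact dvd_trans (dvd_mul_right _ _) hdvd
    · exact Nat.not_dvd_ordCompl hp ht
    · have hmt : m ∣ t := dvd_trans (dvd_mul_left _ _) hdvd
      have hcop : Nat.Coprime m (p ^ t.factorization p) :=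
        Nat.Coprime.pow_right _ ((Nat.coprime_comm.mp (hp.coprime_iff_not_dvd.mpr hpm)))
      refine hcop.dvd_of_dvd_mul_left ?_
      rwa [Nat.ordProj_mul_ordCompl_eq_self t p]
    · exact (Nat.ordProj_mul_ordCompl_eq_self t p).symm
  · rintro ⟨k, w, hek, hpw, hmw, rfl⟩
    have hw : w ≠ 0 := fun h => hpw (h ▸ dvd_zero p)
    constructor
    · exact mul_dvd_mul (pow_dvd_pow p hek) hmw
    · exact Nat.mul_ne_zero (pow_ne_zero _ hp.pos.ne') hw

lemma Sd_eq_ge {p m : ℕ} (hp : p.Prime) (hpm : ¬ p ∣ m) (e : ℕ) :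
    Sd (p ^ (e + 1) * m)
      = cFac p * ((((p : ℝ) ^ 2)⁻¹) ^ (e + 1) * (1 - ((p : ℝ) ^ 2)⁻¹)⁻¹) * Wpm p m := by
  rw [Sd, Wpm, ← tsum_rFun_pow_ge hp e, ← tsum_split hp (fun k => e + 1 ≤ k) (fun w => m ∣ w)]
  apply tsum_congr
  intro t
  rcases eq_or_ne t 0 with rfl | ht
  · rw [if_pos (dvd_zero _), rFun_zero]
    split <;> rfl
  · by_cases h : p ^ (e + 1) * m ∣ t
    · rw [if_pos h, if_pos (((dvd_iff_exists hp hpm (e + 1) t).mp ⟨h, ht⟩))]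
    · rw [if_neg h, if_neg (fun hc => h (((dvd_iff_exists hp hpm (e + 1) t).mpr hc).1))]

lemma Sd_eq_zero {p m : ℕ} (hp : p.Prime) (hpm : ¬ p ∣ m) :
    Sd m = (1 + cFac p * (((p : ℝ) ^ 2)⁻¹ * (1 - ((p : ℝ) ^ 2)⁻¹)⁻¹)) * Wpm p m := by
  have h0 : (∑' k : ℕ, if (fun _ : ℕ => True) k then rFun (p ^ k) else 0) = ∑' k, rFun (p ^ k) :=
    tsum_congr fun k => if_pos trivial
  rw [Sd, Wpm, ← tsum_rFun_pow_all hp, ← h0, ← tsum_split hp (fun _ => True) (fun w => m ∣ w)]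
  apply tsum_congr
  intro t
  rcases eq_or_ne t 0 with rfl | ht
  · rw [if_pos (dvd_zero _), rFun_zero]
    split <;> rfl
  · have hiff := dvd_iff_exists hp hpm 0 t
    rw [pow_zero, one_mul] at hiff
    by_cases h : m ∣ t
    · rw [if_pos h]
      obtain ⟨k, w, _, h2, h3, h4⟩ := hiff.mp ⟨h, ht⟩
      rw [if_pos ⟨k, w, trivial, h2, h3, h4⟩]
    · rw [if_neg h, if_neg]
      rintro ⟨k, w, -, h2, h3, h4⟩
      exact h (hiff.mpr ⟨k, w, Nat.zero_le _, h2, h3, h4⟩).1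

lemma coeff_id {p : ℕ} (hp : 2 ≤ p) (e : ℕ) :
    cFac p * ((((p : ℝ) ^ 2)⁻¹) ^ (e + 1) * (1 - ((p : ℝ) ^ 2)⁻¹)⁻¹)
        * ((p : ℝ) ^ (2 * e + 1) * ((p : ℝ) - 1))
      = 1 + cFac p * (((p : ℝ) ^ 2)⁻¹ * (1 - ((p : ℝ) ^ 2)⁻¹)⁻¹) := by
  have hq : (2 : ℝ) ≤ (p : ℝ) := by exact_mod_cast hp
  have hq0 : (p : ℝ) ≠ 0 := by linarith
  have hden := den_pos hp
  have hx1 : 1 - ((p : ℝ) ^ 2)⁻¹ = ((p : ℝ) ^ 2 - 1) / (p : ℝ) ^ 2 := by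
    field_simp
  have hpow : (((p : ℝ) ^ 2)⁻¹) ^ (e + 1) * (p : ℝ) ^ (2 * e + 1) = (p : ℝ)⁻¹ := by
    rw [inv_pow, ← pow_mul, show 2 * (e + 1) = (2 * e + 1) + 1 by ring, pow_succ]
    field_simp
  have h1 : cFac p * ((((p : ℝ) ^ 2)⁻¹) ^ (e + 1) * (1 - ((p : ℝ) ^ 2)⁻¹)⁻¹)
        * ((p : ℝ) ^ (2 * e + 1) * ((p : ℝ) - 1))
      = cFac p * (((((p : ℝ) ^ 2)⁻¹) ^ (e + 1) * (p : ℝ) ^ (2 * e + 1))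
          * ((1 - ((p : ℝ) ^ 2)⁻¹)⁻¹ * ((p : ℝ) - 1))) := by ring
  rw [h1, hpow, cFac_eq, hx1]
  have hsq : (p : ℝ) ^ 2 - 1 > 0 := by nlinarith
  have hD : (-1 - (p : ℝ) + (p : ℝ) ^ 2) ≠ 0 := by linarith
  field_simp
  ring_nf
  field_simp
  ring

lemma Sd_key : ∀ d : ℕ, 0 < d → Sd d * ((d : ℝ) * (d.totient : ℝ)) = Sd 1 := by
  intro d
  induction d using Nat.strong_induction_on with
  | _ d IH =>
    intro hd
    rcases eq_or_lt_of_le (show 1 ≤ d from hd) with h1 | h2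
    · rw [← h1]; norm_num
    -- d ≥ 2
    have hd1 : d ≠ 1 := by omega
    have hd0 : d ≠ 0 := by omega
    set p := d.minFac with hpdef
    have hp : p.Prime := Nat.minFac_prime hd1
    have hpd : p ∣ d := Nat.minFac_dvd d
    set e' := d.factorization p with he'def
    have he'pos : 0 < e' := hp.factorization_pos_of_dvd hd0 hpd
    obtain ⟨e, he⟩ : ∃ e, e' = e + 1 := ⟨e' - 1, by omega⟩
    set m := d / p ^ e' with hmdef
    have hdm : p ^ e' * m = d := Nat.ordProj_mul_ordCompl_eq_self d p
    have hm0 : 0 < m := Nat.ordCompl_pos p hd0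
    have hpm : ¬ p ∣ m := Nat.not_dvd_ordCompl hp hd0
    have hmd : m < d := by
      have h2p : 2 ≤ p ^ e' := by
        calc 2 ≤ p := hp.two_le
        _ ≤ p ^ e' := Nat.le_self_pow (by omega) p
      nlinarith [hdm, hm0]
    have IHm := IH m hmd hm0
    have hcop : Nat.Coprime (p ^ e') m :=
      Nat.Coprime.pow_left _ (hp.coprime_iff_not_dvd.mpr hpm)
    -- totient computation
    have htot : (d : ℝ) * (d.totient : ℝ)
        = (p : ℝ) ^ (2 * e + 1) * ((p : ℝ) - 1) * ((m : ℝ) * (m.totient : ℝ)) := by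
      have h1 : d.totient = (p ^ e').totient * m.totient := by
        rw [← hdm]; exact Nat.totient_mul hcop
      have h2 : (p ^ e').totient = p ^ e * (p - 1) := by
        rw [he, Nat.totient_prime_pow hp (Nat.succ_pos e)]
        simp
      have hcast : ((p - 1 : ℕ) : ℝ) = (p : ℝ) - 1 := by
        have := hp.two_le
        push_cast [Nat.cast_sub (by omega : 1 ≤ p)]
        ring
      rw [h1, h2, ← hdm, he]
      push_cast [hcast]
      ring
    rw [htot, ← hdm, he, Sd_eq_ge hp hpm e, ← mul_assoc]
    calc cFac p * ((((p : ℝ) ^ 2)⁻¹) ^ (e + 1) * (1 - ((p : ℝ) ^ 2)⁻¹)⁻¹) * Wpm p m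
          * ((p : ℝ) ^ (2 * e + 1) * ((p : ℝ) - 1)) * ((m : ℝ) * (m.totient : ℝ))
        = (cFac p * ((((p : ℝ) ^ 2)⁻¹) ^ (e + 1) * (1 - ((p : ℝ) ^ 2)⁻¹)⁻¹)
            * ((p : ℝ) ^ (2 * e + 1) * ((p : ℝ) - 1))) * Wpm p m
            * ((m : ℝ) * (m.totient : ℝ)) := by ring
      _ = (1 + cFac p * (((p : ℝ) ^ 2)⁻¹ * (1 - ((p : ℝ) ^ 2)⁻¹)⁻¹)) * Wpm p m
            * ((m : ℝ) * (m.totient : ℝ)) := by rw [coeff_id hp.two_le e]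
      _ = Sd m * ((m : ℝ) * (m.totient : ℝ)) := by rw [Sd_eq_zero hp hpm]
      _ = Sd 1 := IHm



lemma Sd_one_eq : Sd 1 = ∑' t : ℕ, rFun t := tsum_congr fun t => if_pos (one_dvd t)

lemma Sd_one_pos : 0 < Sd 1 := by
  rw [Sd_one_eq]
  have h := Summable.le_tsum summable_rFun 1 (fun j _ => rFun_nonneg j)
  rw [rFun_one] at h
  linarith

lemma hasProd_loc :
    HasProd (fun p : Nat.Primes => ∑' k : ℕ, rFun ((p : ℕ) ^ k)) (Sd 1) := by
  rw [Sd_one_eq]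
  refine EulerProduct.eulerProduct_hasProd rFun_one (fun {m n} h => rFun_mul h) ?_ rFun_zero
  have : (fun t => ‖rFun t‖) = rFun := by
    funext t; exact Real.norm_of_nonneg (rFun_nonneg t)
  rw [this]
  exact summable_rFun

lemma loc_eq (p : ℕ) (hp : p.Prime) :
    (1 - 1 / ((p : ℝ) * ((p : ℝ) - 1))) = (∑' k : ℕ, rFun (p ^ k))⁻¹ := by
  rw [tsum_rFun_pow_all hp]
  have hq : (2 : ℝ) ≤ (p : ℝ) := by exact_mod_cast hp.two_le
  have hq0 : (p : ℝ) ≠ 0 := by linarith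
  have hden := den_pos hp.two_le
  have hsq : (0:ℝ) < (p : ℝ) ^ 2 - 1 := by nlinarith
  have hx1 : 1 - ((p : ℝ) ^ 2)⁻¹ = ((p : ℝ) ^ 2 - 1) / (p : ℝ) ^ 2 := by field_simp
  apply eq_inv_of_mul_eq_one_left
  rw [cFac_eq, hx1]
  have hpp : (0:ℝ) < (p : ℝ) * ((p : ℝ) - 1) := by nlinarith
  have hD : (-1 - (p : ℝ) + (p : ℝ) ^ 2) ≠ 0 := by linarith
  have hp1 : (-1 + (p : ℝ)) ≠ 0 := by linarith
  field_simp
  ring_nf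
  field_simp
  ring

lemma hasProd_artin : HasProd
    (fun p : Nat.Primes => (1 - 1 / (((p : ℕ) : ℝ) * (((p : ℕ) : ℝ) - 1)))) (Sd 1)⁻¹ := by
  have h := hasProd_loc
  rw [HasProd] at h ⊢
  have h2 := h.inv₀ Sd_one_pos.ne'
  have : (fun s : Finset Nat.Primes =>
      (∏ p ∈ s, ∑' k : ℕ, rFun ((p : ℕ) ^ k))⁻¹)
      = fun s : Finset Nat.Primes =>
        ∏ p ∈ s, (1 - 1 / (((p : ℕ) : ℝ) * (((p : ℕ) : ℝ) - 1))) := by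
    funext s
    rw [← Finset.prod_inv_distrib]
    exact Finset.prod_congr rfl fun p _ => (loc_eq (p : ℕ) p.prop).symm
  rwa [this] at h2

lemma artin_mul_S1 : artinConst * Sd 1 = 1 := by
  rw [artinConst, hasProd_artin.tprod_eq]
  exact inv_mul_cancel₀ Sd_one_pos.ne'

lemma rho_zero_eq_Sd {d : ℕ} (hd : 0 < d) : rhoDensity 0 d = artinConst * Sd d := by
  rw [rhoDensity, Sd]
  congr 1
  apply tsum_congr
  intro t
  rcases eq_or_ne t 0 with rfl | ht
  · rw [if_neg (by simp), if_pos (dvd_zero d), rFun_zero]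
  · have : (1 ≤ t ∧ (t : ℤ) ≡ 0 [ZMOD (d : ℤ)]) ↔ d ∣ t := by
      constructor
      · rintro ⟨-, hmod⟩
        have := (Int.modEq_zero_iff_dvd).mp hmod
        exact_mod_cast this
      · intro h
        exact ⟨Nat.one_le_iff_ne_zero.mpr ht, Int.modEq_zero_iff_dvd.mpr (by exact_mod_cast h)⟩
    by_cases h : d ∣ t
    · rw [if_pos (this.mpr h), if_pos h]
    · rw [if_neg (fun hc => h (this.mp hc)), if_neg h]

lemma rho_zero_val {d : ℕ} (hd : 0 < d) :
    rhoDensity 0 d = 1 / ((d : ℝ) * (d.totient : ℝ)) := by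
  have hkey := Sd_key d hd
  have htotpos : 0 < d.totient := Nat.totient_pos.mpr hd
  have hpos : (0:ℝ) < (d : ℝ) * (d.totient : ℝ) := by
    have h1 : (0:ℝ) < (d : ℝ) := by exact_mod_cast hd
    have h2 : (0:ℝ) < (d.totient : ℝ) := by exact_mod_cast htotpos
    positivity
  rw [rho_zero_eq_Sd hd]
  have hSd : Sd d = Sd 1 / ((d : ℝ) * (d.totient : ℝ)) := by
    field_simp [hpos.ne'] at hkey ⊢
    linarith [hkey]
  rw [hSd, mul_div_assoc', artin_mul_S1]

lemma mod_cond_iff {d : ℕ} (hd : 0 < d) (t : ℕ) :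
    (1 ≤ t ∧ (t : ℤ) ≡ (d : ℤ) [ZMOD ((2 * d : ℕ) : ℤ)]) ↔
      ∃ k w, k = d.factorization 2 ∧ ¬ 2 ∣ w ∧ (d / 2 ^ d.factorization 2) ∣ w
        ∧ t = 2 ^ k * w := by
  have hd0 : d ≠ 0 := hd.ne'
  set e := d.factorization 2 with hedef
  set m := d / 2 ^ e with hmdef
  have hdm : 2 ^ e * m = d := Nat.ordProj_mul_ordCompl_eq_self d 2
  have hm0 : 0 < m := Nat.ordCompl_pos 2 hd0
  have h2m : ¬ 2 ∣ m := Nat.not_dvd_ordCompl Nat.prime_two hd0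
  constructor
  · rintro ⟨ht, hmod⟩
    obtain ⟨j, hj⟩ := hmod.dvd
    -- hj : (d : ℤ) - t = 2 * d * j
    have htpos : (1 : ℤ) ≤ (t : ℤ) := by exact_mod_cast ht
    have hdpos : (1 : ℤ) ≤ (d : ℤ) := by exact_mod_cast hd
    have hteq : (t : ℤ) = (d : ℤ) * (1 - 2 * j) := by push_cast at hj ⊢; linarith [hj]
    have hspos : 0 < 1 - 2 * j := by
      by_contra h
      push_neg at h
      nlinarith
    obtain ⟨s, hs⟩ : ∃ s : ℕ, (s : ℤ) = 1 - 2 * j := ⟨(1 - 2 * j).toNat, Int.toNat_of_nonneg hspos.le⟩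
    have hts : t = d * s := by
      have : (t : ℤ) = ((d * s : ℕ) : ℤ) := by push_cast [hs]; linarith [hteq]
      exact_mod_cast this
    have hsodd : ¬ 2 ∣ s := by
      rintro ⟨u, hu⟩
      have : (s : ℤ) = 2 * u := by exact_mod_cast hu
      omega
    refine ⟨e, m * s, rfl, ?_, dvd_mul_right m s, ?_⟩
    · intro hdvd
      rcases (Nat.Prime.dvd_mul Nat.prime_two).mp hdvd with h | h
      · exact h2m h
      · exact hsodd h
    · rw [hts, ← hdm, mul_assoc]
  · rintro ⟨k, w, rfl, h2w, hmw, rfl⟩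
    have hw0 : w ≠ 0 := fun h => h2w (h ▸ dvd_zero 2)
    obtain ⟨s, hws⟩ := hmw
    have h2s : ¬ 2 ∣ s := fun h => h2w (hws ▸ h.mul_left m)
    obtain ⟨u, hu⟩ : ∃ u, s = 2 * u + 1 := ⟨s / 2, by omega⟩
    have hts : 2 ^ e * w = d * s := by rw [hws, ← hdm]; ring
    constructor
    · have : 0 < 2 ^ e * w := Nat.mul_pos (Nat.pow_pos (by norm_num)) (Nat.pos_of_ne_zero hw0)
      omega
    · rw [Int.modEq_comm, Int.modEq_iff_dvd]
      refine ⟨(u : ℤ), ?_⟩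
      push_cast [hts, hu]
      ring

lemma rho_d_2d {d : ℕ} (hd : 0 < d) :
    rhoDensity (d : ℤ) (2 * d)
      = artinConst * (rFun (2 ^ d.factorization 2) * Wpm 2 (d / 2 ^ d.factorization 2)) := by
  set e := d.factorization 2 with hedef
  set m := d / 2 ^ e with hmdef
  have hsingle : (∑' k : ℕ, if k = e then rFun (2 ^ k) else 0) = rFun (2 ^ e) := by
    have : ∀ k : ℕ, (if k = e then rFun (2 ^ k) else 0) = (if k = e then rFun (2 ^ e) else 0) := by
      intro k; split
      · next h => rw [h]
      · rfl
    rw [tsum_congr this, tsum_ite_eq]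
  rw [rhoDensity]
  congr 1
  rw [Wpm, ← hsingle, ← tsum_split Nat.prime_two (fun k => k = e) (fun w => m ∣ w)]
  apply tsum_congr
  intro t
  by_cases h : 1 ≤ t ∧ (t : ℤ) ≡ (d : ℤ) [ZMOD ((2 * d : ℕ) : ℤ)]
  · rw [if_pos h, if_pos ((mod_cond_iff hd t).mp h)]
  · rw [if_neg h, if_neg (fun hc => h ((mod_cond_iff hd t).mpr hc))]

lemma rho_zero_2d {d : ℕ} (hd : 0 < d) :
    rhoDensity 0 (2 * d)
      = artinConst * ((cFac 2 * ((((2 : ℝ) ^ 2)⁻¹) ^ (d.factorization 2 + 1)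
          * (1 - ((2 : ℝ) ^ 2)⁻¹)⁻¹)) * Wpm 2 (d / 2 ^ d.factorization 2)) := by
  set e := d.factorization 2 with hedef
  set m := d / 2 ^ e with hmdef
  have hdm : 2 ^ e * m = d := Nat.ordProj_mul_ordCompl_eq_self d 2
  have h2m : ¬ 2 ∣ m := Nat.not_dvd_ordCompl Nat.prime_two hd.ne'
  have h2d : 2 * d = 2 ^ (e + 1) * m := by rw [← hdm, pow_succ]; ring
  rw [rho_zero_eq_Sd (by omega : 0 < 2 * d), h2d, Sd_eq_ge Nat.prime_two h2m e]
  norm_num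

/-- `ρ(0,d) = 1/(d·φ(d))`, and `ρ(d,2d) = ρ(0,2d)` if `d` is odd while
`ρ(d,2d) = 3·ρ(0,2d)` if `d` is even. -/
theorem rhoDensity_zero_eq (d : ℕ) (hd : 1 ≤ d) :
    rhoDensity 0 d = 1 / ((d : ℝ) * (Nat.totient d : ℝ)) ∧
    (Odd d → rhoDensity (d : ℤ) (2 * d) = rhoDensity 0 (2 * d)) ∧
    (Even d → rhoDensity (d : ℤ) (2 * d) = 3 * rhoDensity 0 (2 * d)) := by
  refine ⟨rho_zero_val hd, ?_, ?_⟩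
  · intro hodd
    have h2d : ¬ 2 ∣ d := by rw [Nat.odd_iff] at hodd; omega
    have he : d.factorization 2 = 0 := Nat.factorization_eq_zero_of_not_dvd h2d
    rw [rho_d_2d hd, rho_zero_2d hd, he]
    norm_num [rFun_one, cFac_eq]
  · intro heven
    have h2d : 2 ∣ d := heven.two_dvd
    have hepos : 0 < d.factorization 2 :=
      Nat.Prime.factorization_pos_of_dvd Nat.prime_two (by omega) h2d
    rw [rho_d_2d hd, rho_zero_2d hd, rFun_prime_pow Nat.prime_two hepos.ne']
    rw [cFac_eq, pow_succ]
    norm_num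
    ring
end

section
/- Let a ≥ 1 and d ≥ 1 be integers and set w = gcd(a,d), α = a/w, δ = d/w. If γ(w)·w divides d, where γ(w) = Π_{p | w} p is the squarefree kernel of w, then ρ(a,d) = (ρ(α,δ)/(w·φ(w))) · Π_{p | gcd(δ,w)} (1 − 1/p²)/(1 − 1/(p(p−1))), the product being over primes p dividing gcd(δ,w). -/
/-- With `w = gcd(a,d)`, `α = a/w`, `δ = d/w`: if `γ(w)·w | d` then
`ρ(a,d) = (ρ(α,δ)/(w·φ(w))) · Π_{p | gcd(δ,w)} (1 − 1/p²)/(1 − 1/(p(p−1)))`. -/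
theorem rhoDensity_of_kernel_dvd (a d : ℕ) (ha : 1 ≤ a) (hd : 1 ≤ d)
    (w α δ' : ℕ) (hw : w = Nat.gcd a d) (hα : α = a / w) (hδ : δ' = d / w)
    (hdvd : kernel w * w ∣ d) :
    rhoDensity (a : ℤ) d =
      (rhoDensity (α : ℤ) δ' / ((w : ℝ) * (Nat.totient w : ℝ))) *
        ∏ p ∈ (Nat.gcd δ' w).primeFactors,
          ((1 - 1 / (p : ℝ) ^ 2) / (1 - 1 / ((p : ℝ) * ((p : ℝ) - 1)))) := by
  have hwa : w ∣ a := hw ▸ Nat.gcd_dvd_left a d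
  have hwd : w ∣ d := hw ▸ Nat.gcd_dvd_right a d
  have hw0 : 0 < w := by
    rw [hw]; exact Nat.gcd_pos_of_pos_left d ha
  have ha' : a = w * α := by rw [hα, Nat.mul_div_cancel' hwa]
  have hd' : d = w * δ' := by rw [hδ, Nat.mul_div_cancel' hwd]
  have hδ0 : 0 < δ' := by
    rcases Nat.eq_zero_or_pos δ' with h | h
    · rw [h, mul_zero] at hd'; omega
    · exact h
  have hα0 : 0 < α := by
    rcases Nat.eq_zero_or_pos α with h | h
    · rw [h, mul_zero] at ha'; omega
    · exact h
  have hcop : Nat.Coprime α δ' := by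
    rw [hα, hδ, hw]
    exact Nat.coprime_div_gcd_div_gcd (hw ▸ hw0)
  have hker : kernel w ∣ δ' := by
    have : kernel w * w ∣ w * δ' := hd' ▸ hdvd
    rw [mul_comm (kernel w) w] at this
    exact (mul_dvd_mul_iff_left hw0.ne').mp this
  -- every prime factor of w divides δ'
  have hpw : ∀ p ∈ w.primeFactors, p ∣ δ' := fun p hp =>
    dvd_trans (Finset.dvd_prod_of_mem _ hp) hker
  -- coprimality of w with any s ≡ α [ZMOD δ']
  have hcws : ∀ s : ℕ, (s : ℤ) ≡ (α : ℤ) [ZMOD (δ' : ℤ)] → Nat.Coprime w s := by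
    intro s hs
    rw [Nat.coprime_iff_gcd_eq_one]
    by_contra hne
    set g := Nat.gcd w s with hg
    have hp : (g.minFac).Prime := Nat.minFac_prime hne
    set p := g.minFac
    have hpw' : p ∣ w := dvd_trans (Nat.minFac_dvd g) (Nat.gcd_dvd_left w s)
    have hps : p ∣ s := dvd_trans (Nat.minFac_dvd g) (Nat.gcd_dvd_right w s)
    have hpδ : p ∣ δ' := hpw p (Nat.mem_primeFactors.mpr ⟨hp, hpw', hw0.ne'⟩)
    have hdvd1 : (δ' : ℤ) ∣ (α : ℤ) - (s : ℤ) := hs.dvd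
    have hpz : (p : ℤ) ∣ (α : ℤ) - (s : ℤ) := dvd_trans (Int.natCast_dvd_natCast.mpr hpδ) hdvd1
    have hpα : (p : ℤ) ∣ (α : ℤ) := by
      have := dvd_add hpz (Int.natCast_dvd_natCast.mpr hps)
      simpa using this
    have hpα' : p ∣ α := Int.natCast_dvd_natCast.mp hpα
    have : p ∣ Nat.gcd α δ' := Nat.dvd_gcd hpα' hpδ
    rw [Nat.coprime_iff_gcd_eq_one.mp hcop] at this
    exact hp.one_lt.ne' (Nat.dvd_one.mp this)
  have hwz : (w : ℤ) ≠ 0 := Int.natCast_ne_zero.mpr hw0.ne'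
  -- equivalence of the congruence conditions
  have hcond : ∀ s : ℕ, (1 ≤ w * s ∧ ((w * s : ℕ) : ℤ) ≡ (a : ℤ) [ZMOD (d : ℤ)]) ↔
      (1 ≤ s ∧ (s : ℤ) ≡ (α : ℤ) [ZMOD (δ' : ℤ)]) := by
    intro s
    have hmod : (((w * s : ℕ) : ℤ) ≡ (a : ℤ) [ZMOD (d : ℤ)]) ↔
        ((s : ℤ) ≡ (α : ℤ) [ZMOD (δ' : ℤ)]) := by
      rw [Int.modEq_iff_dvd, Int.modEq_iff_dvd]
      push_cast [ha', hd']
      rw [show (w : ℤ) * (α : ℤ) - (w : ℤ) * (s : ℤ) = (w : ℤ) * ((α : ℤ) - (s : ℤ)) by ring,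
        mul_dvd_mul_iff_left hwz]
    constructor
    · rintro ⟨h1, h2⟩
      refine ⟨?_, hmod.mp h2⟩
      rcases Nat.eq_zero_or_pos s with rfl | h
      · simp at h1
      · exact h
    · rintro ⟨h1, h2⟩
      exact ⟨Nat.one_le_iff_ne_zero.mpr (by positivity), hmod.mpr h2⟩
  -- the multiplicative constant
  set c : ℝ := (1 / (w : ℝ) ^ 2) *
      ∏ p ∈ w.primeFactors, (((p : ℝ) ^ 2 - 1) / ((p : ℝ) ^ 2 - (p : ℝ) - 1)) with hc
  -- key sum identity
  have hkey : (∑' t : ℕ, if 1 ≤ t ∧ (t : ℤ) ≡ (a : ℤ) [ZMOD (d : ℤ)] then rFun t else 0)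
      = c * ∑' s : ℕ, if 1 ≤ s ∧ (s : ℤ) ≡ (α : ℤ) [ZMOD (δ' : ℤ)] then rFun s else 0 := by
    have hinj : Function.Injective (fun s : ℕ => w * s) := fun x y h =>
      Nat.eq_of_mul_eq_mul_left hw0 h
    have hsupp : Function.support
        (fun t : ℕ => if 1 ≤ t ∧ (t : ℤ) ≡ (a : ℤ) [ZMOD (d : ℤ)] then rFun t else 0)
        ⊆ Set.range (fun s : ℕ => w * s) := by
      intro t ht
      have hcondt : 1 ≤ t ∧ (t : ℤ) ≡ (a : ℤ) [ZMOD (d : ℤ)] := by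
        by_contra h
        simp only [Function.mem_support, if_neg h, ne_eq, not_true_eq_false] at ht
      have h1 : (d : ℤ) ∣ (a : ℤ) - (t : ℤ) := hcondt.2.dvd
      have h2 : (w : ℤ) ∣ (a : ℤ) - (t : ℤ) := dvd_trans (Int.natCast_dvd_natCast.mpr hwd) h1
      have h3 : (w : ℤ) ∣ (a : ℤ) := Int.natCast_dvd_natCast.mpr hwa
      have h4 : (w : ℤ) ∣ (t : ℤ) := by
        have := dvd_sub h3 h2
        simpa using this
      have hwt : w ∣ t := Int.natCast_dvd_natCast.mp h4
      exact ⟨t / w, Nat.mul_div_cancel' hwt⟩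
    rw [← Function.Injective.tsum_eq hinj hsupp, ← tsum_mul_left]
    refine tsum_congr fun s => ?_
    by_cases hs : 1 ≤ s ∧ (s : ℤ) ≡ (α : ℤ) [ZMOD (δ' : ℤ)]
    · rw [if_pos ((hcond s).mpr hs), if_pos hs]
      have hcws' : Nat.Coprime w s := hcws s hs.2
      have hs0 : s ≠ 0 := Nat.one_le_iff_ne_zero.mp hs.1
      show rFun (w * s) = c * rFun s
      unfold rFun
      rw [Nat.primeFactors_mul hw0.ne' hs0, Finset.prod_union hcws'.disjoint_primeFactors, hc]
      push_cast
      ring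
    · rw [if_neg (fun h => hs ((hcond s).mp h)), if_neg hs, mul_zero]
  -- prime factors of gcd δ' w are exactly those of w
  have hPF : (Nat.gcd δ' w).primeFactors = w.primeFactors := by
    rw [Nat.primeFactors_gcd hδ0.ne' hw0.ne']
    refine Finset.inter_eq_right.mpr fun p hp => ?_
    exact Nat.mem_primeFactors.mpr ⟨Nat.prime_of_mem_primeFactors hp, hpw p hp, hδ0.ne'⟩
  -- totient formula over ℝ
  have hprodden : (∏ p ∈ w.primeFactors, ((p:ℝ)^2 - (p:ℝ) - 1)) ≠ 0 := by
    refine Finset.prod_ne_zero_iff.mpr fun p hp => ?_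
    have h2 : (2:ℝ) ≤ (p:ℝ) := by exact_mod_cast (Nat.prime_of_mem_primeFactors hp).two_le
    nlinarith
  have hprodp : (0:ℝ) < ∏ p ∈ w.primeFactors, (p : ℝ) := by
    refine Finset.prod_pos fun p hp => ?_
    exact_mod_cast (Nat.prime_of_mem_primeFactors hp).pos
  have hφR : (Nat.totient w : ℝ) * ∏ p ∈ w.primeFactors, (p : ℝ)
      = (w : ℝ) * ∏ p ∈ w.primeFactors, ((p : ℝ) - 1) := by
    have h := Nat.totient_mul_prod_primeFactors w
    have h2 : ((Nat.totient w * ∏ p ∈ w.primeFactors, p : ℕ) : ℝ)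
        = ((w * ∏ p ∈ w.primeFactors, (p - 1) : ℕ) : ℝ) := Nat.cast_inj.mpr h
    rw [Nat.cast_mul, Nat.cast_mul, Nat.cast_prod, Nat.cast_prod] at h2
    rw [h2]
    congr 1
    refine Finset.prod_congr rfl fun p hp => ?_
    have h1p : 1 ≤ p := (Nat.prime_of_mem_primeFactors hp).one_lt.le
    rw [Nat.cast_sub h1p, Nat.cast_one]
  have hφ0 : (Nat.totient w : ℝ) ≠ 0 :=
    Nat.cast_ne_zero.mpr (Nat.totient_pos.mpr hw0).ne'
  have hwR : (w : ℝ) ≠ 0 := Nat.cast_ne_zero.mpr hw0.ne'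
  -- the per-prime identity, aggregated
  have hprod : (∏ p ∈ w.primeFactors, (((p : ℝ) ^ 2 - 1) / ((p : ℝ) ^ 2 - (p : ℝ) - 1)))
      * (∏ p ∈ w.primeFactors, ((p : ℝ) - 1))
      = (∏ p ∈ w.primeFactors,
          ((1 - 1 / (p : ℝ) ^ 2) / (1 - 1 / ((p : ℝ) * ((p : ℝ) - 1)))))
        * (∏ p ∈ w.primeFactors, (p : ℝ)) := by
    rw [← Finset.prod_mul_distrib, ← Finset.prod_mul_distrib]
    refine Finset.prod_congr rfl fun p hp => ?_
    have hp' := Nat.prime_of_mem_primeFactors hp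
    have h2 : (2:ℝ) ≤ (p:ℝ) := by exact_mod_cast hp'.two_le
    have h0 : (p:ℝ) ≠ 0 := by nlinarith
    have h1 : (p:ℝ) - 1 ≠ 0 := by nlinarith
    have h3 : (p:ℝ)^2 - (p:ℝ) - 1 ≠ 0 := by nlinarith
    have h4 : (p:ℝ) * ((p:ℝ) - 1) ≠ 0 := mul_ne_zero h0 h1
    have e1 : 1 - 1/(p:ℝ)^2 = ((p:ℝ)^2-1)/(p:ℝ)^2 := by field_simp
    have e2 : 1 - 1/((p:ℝ)*((p:ℝ)-1)) = ((p:ℝ)^2-(p:ℝ)-1)/((p:ℝ)*((p:ℝ)-1)) := by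
      rw [eq_div_iff h4, sub_mul, one_div, inv_mul_cancel₀ h4]; ring
    rw [e1, e2, div_div_div_comm]
    field_simp
  -- the constant equals the target expression
  have hmain : c * ((w : ℝ) * (Nat.totient w : ℝ))
      = ∏ p ∈ w.primeFactors,
          ((1 - 1 / (p : ℝ) ^ 2) / (1 - 1 / ((p : ℝ) * ((p : ℝ) - 1)))) := by
    have hstep : c * ((w : ℝ) * (Nat.totient w : ℝ)) * ∏ p ∈ w.primeFactors, (p : ℝ)
        = (∏ p ∈ w.primeFactors,
            ((1 - 1 / (p : ℝ) ^ 2) / (1 - 1 / ((p : ℝ) * ((p : ℝ) - 1)))))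
          * ∏ p ∈ w.primeFactors, (p : ℝ) := by
      calc c * ((w : ℝ) * (Nat.totient w : ℝ)) * ∏ p ∈ w.primeFactors, (p : ℝ)
          = c * (w : ℝ) * ((Nat.totient w : ℝ) * ∏ p ∈ w.primeFactors, (p : ℝ)) := by ring
        _ = c * (w : ℝ) * ((w : ℝ) * ∏ p ∈ w.primeFactors, ((p : ℝ) - 1)) := by rw [hφR]
        _ = (∏ p ∈ w.primeFactors, (((p : ℝ) ^ 2 - 1) / ((p : ℝ) ^ 2 - (p : ℝ) - 1)))
              * (∏ p ∈ w.primeFactors, ((p : ℝ) - 1)) := by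
            rw [hc, Finset.prod_div_distrib]; field_simp
        _ = _ := hprod
    exact mul_right_cancel₀ hprodp.ne' hstep
  rw [rhoDensity, rhoDensity, hkey, hPF, ← hmain]
  field_simp
end

section
/- For every Dirichlet character χ modulo d one has |A_χ| ≤ 1, with equality if and only if χ is the principal character modulo d. -/
set_option maxHeartbeats 1000000 in
/-- Core estimate for a single Euler factor. -/
lemma achi_factor_key (q : ℝ) (hq : 2 ≤ q) (z : ℂ) (hz : ‖z‖ = 1) :
    (1 + (z - 1) * (q : ℂ) / (((q : ℂ) ^ 2 - z) * ((q : ℂ) - 1))) ≠ 0 ∧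
    ‖1 + (z - 1) * (q : ℂ) / (((q : ℂ) ^ 2 - z) * ((q : ℂ) - 1))‖ ≤ 1 ∧
    (z ≠ 1 → ‖1 + (z - 1) * (q : ℂ) / (((q : ℂ) ^ 2 - z) * ((q : ℂ) - 1))‖ < 1) := by
  have hxy : z.re * z.re + z.im * z.im = 1 := by
    have h := Complex.normSq_eq_norm_sq z
    rw [hz] at h
    simpa [Complex.normSq_apply] using h
  have hNsqgen : ∀ A : ℝ, Complex.normSq ((A : ℂ) + z) = (A + z.re) ^ 2 + z.im ^ 2 := by
    intro A
    simp [Complex.normSq_apply]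
    ring
  have hDsqgen : ∀ B C : ℝ, Complex.normSq (((B : ℂ) - z) * (C : ℂ))
      = ((B - z.re) ^ 2 + z.im ^ 2) * C ^ 2 := by
    intro B C
    rw [map_mul]
    simp [Complex.normSq_apply]
    ring
  set x := z.re with hxdef
  set y := z.im with hydef
  have hx1 : x ≤ 1 := by nlinarith [sq_nonneg (x - 1), sq_nonneg y]
  have hq0 : (0:ℝ) < q := by linarith
  have habs1 : q ^ 2 - 1 ≤ ‖(q : ℂ) ^ 2 - z‖ := by
    have h2 : ‖(q : ℂ) ^ 2‖ = q ^ 2 := by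
      rw [norm_pow, Complex.norm_real, Real.norm_eq_abs, abs_of_pos hq0]
    calc q ^ 2 - 1 = ‖(q : ℂ) ^ 2‖ - ‖z‖ := by rw [h2, hz]
      _ ≤ ‖(q : ℂ) ^ 2 - z‖ := norm_sub_norm_le _ _
  have hD1 : ((q : ℂ) ^ 2 - z) ≠ 0 := by
    intro h
    rw [h] at habs1
    simp at habs1
    rw [abs_of_pos hq0] at habs1
    nlinarith
  have hD2 : ((q : ℂ) - 1) ≠ 0 := by
    have : ((q : ℂ) - 1) = ((q - 1 : ℝ) : ℂ) := by push_cast; ring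
    rw [this, Complex.ofReal_ne_zero]
    nlinarith
  set D : ℂ := ((q : ℂ) ^ 2 - z) * ((q : ℂ) - 1) with hDdef
  have hD : D ≠ 0 := mul_ne_zero hD1 hD2
  have hrw : 1 + (z - 1) * (q : ℂ) / D = (((q ^ 3 - q ^ 2 - q : ℝ) : ℂ) + z) / D := by
    field_simp
    push_cast
    ring
  set N : ℂ := ((q ^ 3 - q ^ 2 - q : ℝ) : ℂ) + z with hNdef
  have hA2 : (2:ℝ) ≤ q ^ 3 - q ^ 2 - q := by nlinarith
  have hNabs : 1 ≤ ‖N‖ := by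
    have h2 : ‖((q ^ 3 - q ^ 2 - q : ℝ) : ℂ)‖ = q ^ 3 - q ^ 2 - q := by
      rw [Complex.norm_real, Real.norm_eq_abs, abs_of_pos (by linarith)]
    calc (1:ℝ) = (q ^ 3 - q ^ 2 - q) - 1 - (q ^ 3 - q ^ 2 - q - 2) := by ring
      _ ≤ ‖((q ^ 3 - q ^ 2 - q : ℝ) : ℂ)‖ - ‖-z‖ := by
          rw [h2, norm_neg, hz]; linarith
      _ ≤ ‖((q ^ 3 - q ^ 2 - q : ℝ) : ℂ) - -z‖ := norm_sub_norm_le _ _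
      _ = ‖N‖ := by rw [hNdef]; ring_nf
  have hN0 : N ≠ 0 := by
    intro h; rw [h] at hNabs; simp at hNabs; linarith
  have hDpos : 0 < ‖D‖ := norm_pos_iff.mpr hD
  have hNsq : Complex.normSq N = (q ^ 3 - q ^ 2 - q + x) ^ 2 + y ^ 2 := hNsqgen _
  have hDsq : Complex.normSq D = ((q ^ 2 - x) ^ 2 + y ^ 2) * (q - 1) ^ 2 := by
    have h1 : D = (((q ^ 2 : ℝ) : ℂ) - z) * ((q - 1 : ℝ) : ℂ) := by
      rw [hDdef]; push_cast; ring
    rw [h1, hDsqgen]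
  have hident : Complex.normSq D - Complex.normSq N
      = 2 * (q ^ 4 - q ^ 3 - q) * (1 - x) + ((q - 1) ^ 2 - 1) * (x * x + y * y - 1) := by
    rw [hNsq, hDsq]; ring
  have hzero : ((q - 1) ^ 2 - 1) * (x * x + y * y - 1) = 0 := by
    rw [show x * x + y * y - 1 = 0 by linarith]; ring
  have hq4 : (0:ℝ) < q ^ 4 - q ^ 3 - q := by nlinarith
  have hle : Complex.normSq N ≤ Complex.normSq D := by
    nlinarith [mul_nonneg (le_of_lt hq4) (show (0:ℝ) ≤ 1 - x by linarith)]
  have habsle : ‖N‖ ≤ ‖D‖ := by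
    rw [Complex.norm_def, Complex.norm_def]
    exact Real.sqrt_le_sqrt hle
  refine ⟨?_, ?_, ?_⟩
  · rw [hrw]
    exact div_ne_zero hN0 hD
  · rw [hrw, norm_div, div_le_one hDpos]
    exact habsle
  · intro hzne
    have hxlt : x < 1 := by
      rcases lt_or_eq_of_le hx1 with h | h
      · exact h
      · exfalso
        apply hzne
        have hy0 : y = 0 := by
          have : y * y = 0 := by nlinarith
          exact mul_self_eq_zero.mp this
        rw [Complex.ext_iff]
        refine ⟨?_, ?_⟩
        · show x = (1:ℂ).re
          rw [Complex.one_re]; exact h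
        · show y = (1:ℂ).im
          rw [Complex.one_im]; exact hy0
    have hlt : Complex.normSq N < Complex.normSq D := by
      have hpos : 0 < 2 * (q ^ 4 - q ^ 3 - q) * (1 - x) := by
        have := mul_pos hq4 (show (0:ℝ) < 1 - x by linarith)
        linarith
      linarith [hident, hzero]
    have hltabs : ‖N‖ < ‖D‖ := by
      rw [Complex.norm_def, Complex.norm_def]
      exact Real.sqrt_lt_sqrt (Complex.normSq_nonneg _) hlt
    rw [hrw, norm_div, div_lt_one hDpos]
    exact hltabs

/-- Bound on the deviation of an Euler factor from 1. -/
lemma achi_factor_dev (q : ℝ) (hq : 2 ≤ q) (z : ℂ) (hz : ‖z‖ = 1) :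
    ‖(z - 1) * (q : ℂ) / (((q : ℂ) ^ 2 - z) * ((q : ℂ) - 1))‖
      ≤ 2 * q / ((q ^ 2 - 1) * (q - 1)) := by
  have hq0 : (0:ℝ) < q := by linarith
  have habs1 : q ^ 2 - 1 ≤ ‖(q : ℂ) ^ 2 - z‖ := by
    have h2 : ‖(q : ℂ) ^ 2‖ = q ^ 2 := by
      rw [norm_pow, Complex.norm_real, Real.norm_eq_abs, abs_of_pos hq0]
    calc q ^ 2 - 1 = ‖(q : ℂ) ^ 2‖ - ‖z‖ := by rw [h2, hz]
      _ ≤ ‖(q : ℂ) ^ 2 - z‖ := norm_sub_norm_le _ _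
  have habs2 : ‖(q : ℂ) - 1‖ = q - 1 := by
    have h : ((q : ℂ) - 1) = ((q - 1 : ℝ) : ℂ) := by push_cast; ring
    rw [h, Complex.norm_real, Real.norm_eq_abs, abs_of_pos (by linarith)]
  have habs3 : ‖(z - 1) * (q : ℂ)‖ ≤ 2 * q := by
    rw [norm_mul]
    have h1 : ‖z - 1‖ ≤ 2 := by
      calc ‖z - 1‖ = ‖z - 1‖ := rfl
        _ ≤ ‖z‖ + ‖(1:ℂ)‖ := norm_sub_le _ _
        _ = 2 := by rw [hz]; norm_num
    have h2 : ‖(q:ℂ)‖ = q := by rw [Complex.norm_real, Real.norm_eq_abs, abs_of_pos hq0]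
    rw [h2]
    exact mul_le_mul_of_nonneg_right h1 (le_of_lt hq0)
  have hdenpos : (0:ℝ) < (q ^ 2 - 1) * (q - 1) := by nlinarith
  rw [norm_div]
  refine div_le_div₀ (by positivity) habs3 hdenpos ?_
  rw [norm_mul, habs2]
  exact mul_le_mul_of_nonneg_right habs1 (by linarith)

/-- The absolutely convergent Euler product
`A_χ = Π_{p prime, p ∤ d} (1 + (χ(p)−1)·p/((p²−χ(p))(p−1)))`. -/
noncomputable def Achi {d : ℕ} (χ : DirichletCharacter ℂ d) : ℂ :=
  ∏' p : Nat.Primes,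
    if (p : ℕ) ∣ d then 1
    else 1 + (χ ((p : ℕ) : ZMod d) - 1) * ((p : ℕ) : ℂ) /
        ((((p : ℕ) : ℂ) ^ 2 - χ ((p : ℕ) : ZMod d)) * (((p : ℕ) : ℂ) - 1))

set_option maxHeartbeats 1000000 in
/-- `|A_χ| ≤ 1`, with equality if and only if `χ` is the principal character mod `d`. -/
theorem abs_Achi_le_one (d : ℕ) (hd : 0 < d) (χ : DirichletCharacter ℂ d) :
    ‖Achi χ‖ ≤ 1 ∧ (‖Achi χ‖ = 1 ↔ χ = 1) := by
  haveI : NeZero d := ⟨hd.ne'⟩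
  set f : Nat.Primes → ℂ := fun p =>
    if (p : ℕ) ∣ d then 1
    else 1 + (χ ((p : ℕ) : ZMod d) - 1) * ((p : ℕ) : ℂ) /
        ((((p : ℕ) : ℂ) ^ 2 - χ ((p : ℕ) : ZMod d)) * (((p : ℕ) : ℂ) - 1)) with hfdef
  have hAchi : Achi χ = ∏' p, f p := rfl
  have hq2 : ∀ p : Nat.Primes, (2:ℝ) ≤ ((p : ℕ) : ℝ) := by
    intro p; exact_mod_cast p.2.two_le
  have habsz : ∀ p : Nat.Primes, ¬ (p : ℕ) ∣ d → ‖χ ((p : ℕ) : ZMod d)‖ = 1 := by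
    intro p hpd
    have hu : IsUnit (((p : ℕ) : ZMod d)) := (ZMod.isUnit_prime_iff_not_dvd p.2).mpr hpd
    rw [← hu.unit_spec]
    exact DirichletCharacter.unit_norm_eq_one χ hu.unit
  have hfp : ∀ p : Nat.Primes, ¬ (p : ℕ) ∣ d → f p
      = 1 + (χ ((p : ℕ) : ZMod d) - 1) * ((((p : ℕ) : ℝ)) : ℂ) /
        ((((((p : ℕ) : ℝ)) : ℂ) ^ 2 - χ ((p : ℕ) : ZMod d)) * (((((p : ℕ) : ℝ)) : ℂ) - 1)) := by
    intro p hpd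
    simp only [Complex.ofReal_natCast]
    exact if_neg hpd
  have hkey : ∀ p : Nat.Primes, ¬ (p : ℕ) ∣ d →
      f p ≠ 0 ∧ ‖f p‖ ≤ 1 ∧
        (χ ((p : ℕ) : ZMod d) ≠ 1 → ‖f p‖ < 1) := by
    intro p hpd
    have h := achi_factor_key ((p : ℕ) : ℝ) (hq2 p) (χ ((p : ℕ) : ZMod d)) (habsz p hpd)
    rw [← hfp p hpd] at h
    exact h
  have hne : ∀ p : Nat.Primes, f p ≠ 0 := by
    intro p
    by_cases hpd : (p : ℕ) ∣ d
    · rw [show f p = 1 from if_pos hpd]; exact one_ne_zero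
    · exact (hkey p hpd).1
  have habsle1 : ∀ p : Nat.Primes, ‖f p‖ ≤ 1 := by
    intro p
    by_cases hpd : (p : ℕ) ∣ d
    · rw [show f p = 1 from if_pos hpd]; simp
    · exact (hkey p hpd).2.1
  -- summability of the logs
  have hg : Summable (fun p : Nat.Primes => 8 / ((p : ℕ) : ℝ) ^ 2) := by
    have h1 : Summable (fun n : ℕ => 8 / (n : ℝ) ^ 2) := by
      exact ((Real.summable_one_div_nat_pow.mpr one_lt_two).mul_left 8).congr (fun n => mul_one_div _ _)
    exact h1.comp_injective Nat.Primes.coe_nat_injective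
  have hlog : Summable (fun p : Nat.Primes => Complex.log (f p)) := by
    refine Summable.of_norm_bounded_eventually (g := fun p : Nat.Primes => 8 / ((p : ℕ) : ℝ) ^ 2) hg ?_
    rw [Filter.eventually_cofinite]
    refine Set.Finite.subset (Set.Finite.preimage
      (Nat.Primes.coe_nat_injective.injOn) (Set.finite_Iio 3)) ?_
    intro p hp
    simp only [Set.mem_setOf_eq, not_le] at hp
    simp only [Set.mem_preimage, Set.mem_Iio]
    by_contra hp3
    push_neg at hp3
    refine absurd (show 8 / ((p : ℕ) : ℝ) ^ 2 < ‖Complex.log (f p)‖ from hp) (not_lt.mpr ?_)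
    have hq3 : (3:ℝ) ≤ ((p : ℕ) : ℝ) := by exact_mod_cast hp3
    set q : ℝ := ((p : ℕ) : ℝ) with hqdef
    by_cases hpd : (p : ℕ) ∣ d
    · rw [show f p = 1 from if_pos hpd, Complex.log_one]
      simp only [norm_zero]
      positivity
    · set z : ℂ := χ ((p : ℕ) : ZMod d) with hzdef
      have hw := achi_factor_dev q (by linarith) z (habsz p hpd)
      have hwhalf : ‖(z - 1) * (q : ℂ) / (((q : ℂ) ^ 2 - z) * ((q : ℂ) - 1))‖
          ≤ 1 / 2 := by
        refine hw.trans ?_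
        rw [div_le_div_iff₀ (by nlinarith) (by norm_num)]
        nlinarith
      have hlog1 : ‖Complex.log (1 + (z - 1) * (q : ℂ) / (((q : ℂ) ^ 2 - z) * ((q : ℂ) - 1)))‖
          ≤ 3 / 2 * ‖(z - 1) * (q : ℂ) / (((q : ℂ) ^ 2 - z) * ((q : ℂ) - 1))‖ := by
        apply Complex.norm_log_one_add_half_le_self
        exact hwhalf
      rw [hfp p hpd]
      refine hlog1.trans ?_
      have h8 : 3 / 2 * (2 * q / ((q ^ 2 - 1) * (q - 1))) ≤ 8 / q ^ 2 := by
        rw [show 3 / 2 * (2 * q / ((q ^ 2 - 1) * (q - 1)))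
              = 3 * q / ((q ^ 2 - 1) * (q - 1)) by ring]
        rw [div_le_div_iff₀ (by nlinarith) (by positivity)]
        nlinarith [mul_nonneg (mul_nonneg (show (0:ℝ) ≤ q - 3 by linarith)
          (show (0:ℝ) ≤ q by linarith)) (show (0:ℝ) ≤ q by linarith)]
      calc 3 / 2 * ‖(z - 1) * (q : ℂ) / (((q : ℂ) ^ 2 - z) * ((q : ℂ) - 1))‖
          ≤ 3 / 2 * (2 * q / ((q ^ 2 - 1) * (q - 1))) := by linarith
        _ ≤ 8 / q ^ 2 := h8
  have hmult : Multipliable f :=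
    Complex.multipliable_of_summable_log hlog
  have hP : HasProd f (Achi χ) := by rw [hAchi]; exact hmult.hasProd
  have hle1 : ‖Achi χ‖ ≤ 1 := by
    refine le_of_tendsto' hP.norm (fun s => ?_)
    exact Finset.prod_le_one (fun i _ => norm_nonneg _) (fun i _ => habsle1 i)
  refine ⟨hle1, ?_, ?_⟩
  · -- abs = 1 → χ = 1
    intro h1
    by_contra hne1
    obtain ⟨u, hu⟩ := MulChar.ne_one_iff.mp hne1
    obtain ⟨p, _, hp, hpa⟩ :=
      Nat.forall_exists_prime_gt_and_eq_mod (q := d) (a := (u : ZMod d)) u.isUnit 0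
    set P : Nat.Primes := ⟨p, hp⟩ with hPdef
    have hpd : ¬ (P : ℕ) ∣ d := by
      intro hdvd
      exact ((ZMod.isUnit_prime_iff_not_dvd hp).mp (hpa ▸ u.isUnit)) hdvd
    have hzne : χ ((P : ℕ) : ZMod d) ≠ 1 := by
      show χ ((p : ℕ) : ZMod d) ≠ 1
      rw [hpa]
      exact hu
    have hflt : ‖f P‖ < 1 := (hkey P hpd).2.2 hzne
    have hbound : ‖Achi χ‖ ≤ ‖f P‖ := by
      refine le_of_tendsto hP.norm ?_
      change ∀ᶠ s in (Filter.atTop : Filter (Finset Nat.Primes)), _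
      rw [Filter.eventually_atTop]
      refine ⟨{P}, fun s hs => ?_⟩
      have hPs : P ∈ s := hs (Finset.mem_singleton_self P)
      calc ∏ i ∈ s, ‖f i‖ = ‖f P‖ * ∏ i ∈ s.erase P, ‖f i‖ :=
            (Finset.mul_prod_erase s _ hPs).symm
        _ ≤ ‖f P‖ * 1 := mul_le_mul_of_nonneg_left
            (Finset.prod_le_one (fun i _ => norm_nonneg _) (fun i _ => habsle1 i))
            (norm_nonneg _)
        _ = ‖f P‖ := mul_one _
    linarith
  · -- χ = 1 → abs = 1
    intro h1
    have hall : ∀ p : Nat.Primes, f p = 1 := by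
      intro p
      by_cases hpd : (p : ℕ) ∣ d
      · exact if_pos hpd
      · have hchi : χ ((p : ℕ) : ZMod d) = 1 := by
          rw [h1]
          exact MulChar.one_apply ((ZMod.isUnit_prime_iff_not_dvd p.2).mpr hpd)
        rw [show f p = _ from if_neg hpd, hchi]
        ring
    rw [hAchi, tprod_congr hall, tprod_one]
    simp
end

section
/- Let f(z) = Σ_{j ≥ 1} a(j)·z^j be a formal power series with integer coefficients and zero constant term. For each integer r ≥ 1 define the formal power series H^{(r)}(z) = (1/r)·Σ_{d | r} μ(d)·f(z^d)^{r/d}, a priori with rational coefficients, where μ is the Möbius function and f(z^d) denotes the substitution of z^d for z in f. Then every coefficient of H^{(r)} is an integer. -/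
open PowerSeries Finset

namespace CoeffHAux

/-- "Expand" for power series over ℤ, defined coefficientwise: `E p g = g(z^p)`. -/
noncomputable def E (p : ℕ) (g : PowerSeries ℤ) : PowerSeries ℤ :=
  PowerSeries.mk fun n => if p ∣ n then PowerSeries.coeff (R := ℤ) (n / p) g else 0

lemma coeff_E (p : ℕ) (g : PowerSeries ℤ) (n : ℕ) :
    PowerSeries.coeff (R := ℤ) n (E p g) = if p ∣ n then PowerSeries.coeff (R := ℤ) (n / p) g else 0 :=
  PowerSeries.coeff_mk _ _

/-- Frobenius for power series over `ZMod p`, coefficientwise. -/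
lemma coeff_pow_char {p : ℕ} (hp : p.Prime) (g : PowerSeries (ZMod p)) (n : ℕ) :
    PowerSeries.coeff n (g ^ p) =
      if p ∣ n then PowerSeries.coeff (n / p) g else 0 := by
  haveI : Fact p.Prime := ⟨hp⟩
  have h1 : PowerSeries.coeff n (g ^ p)
      = ((PowerSeries.trunc (n + 1) g) ^ p).coeff n := by
    rw [← PowerSeries.coeff_coe_trunc_of_lt n.lt_succ_self (f := g ^ p),
      ← PowerSeries.trunc_trunc_pow, PowerSeries.coeff_coe_trunc_of_lt n.lt_succ_self,
      ← Polynomial.coe_pow, Polynomial.coeff_coe]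
  rw [h1, ← ZMod.expand_card, Polynomial.coeff_expand hp.pos, PowerSeries.coeff_trunc]
  split_ifs with h h2
  · rfl
  · exact absurd (Nat.lt_succ_of_le (Nat.div_le_self n p)) h2
  · rfl

lemma dvd_coeff_pow_sub_E (p : ℕ) (hp : p.Prime) (g : PowerSeries ℤ) (n : ℕ) :
    (p : ℤ) ∣ PowerSeries.coeff (R := ℤ) n (g ^ p - E p g) := by
  haveI : Fact p.Prime := ⟨hp⟩
  rw [← ZMod.intCast_zmod_eq_zero_iff_dvd]
  have hmap : ((PowerSeries.coeff (R := ℤ) n (g ^ p - E p g) : ℤ) : ZMod p)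
      = PowerSeries.coeff n ((PowerSeries.map (Int.castRingHom (ZMod p)) g) ^ p
          - PowerSeries.map (Int.castRingHom (ZMod p)) (E p g)) := by
    simp only [map_sub, Int.cast_sub, ← map_pow, PowerSeries.coeff_map]
    rfl
  rw [hmap]
  have hE : PowerSeries.coeff n (PowerSeries.map (Int.castRingHom (ZMod p)) (E p g))
      = if p ∣ n then PowerSeries.coeff (n / p)
          (PowerSeries.map (Int.castRingHom (ZMod p)) g) else 0 := by
    rw [PowerSeries.coeff_map, coeff_E, apply_ite (Int.castRingHom (ZMod p)),
      PowerSeries.coeff_map, map_zero]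
  rw [map_sub, hE, coeff_pow_char hp, sub_self]

lemma C_dvd_of_dvd_coeff (c : ℤ) (h : PowerSeries ℤ)
    (hc : ∀ n, c ∣ PowerSeries.coeff (R := ℤ) n h) : (PowerSeries.C (R := ℤ) c) ∣ h := by
  refine ⟨PowerSeries.mk fun n => PowerSeries.coeff (R := ℤ) n h / c, ?_⟩
  ext n
  rw [PowerSeries.coeff_C_mul, PowerSeries.coeff_mk, Int.mul_ediv_cancel' (hc n)]

lemma dvd_coeff_of_C_dvd (c : ℤ) (h : PowerSeries ℤ) (hdvd : (PowerSeries.C (R := ℤ) c) ∣ h)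
    (n : ℕ) : c ∣ PowerSeries.coeff (R := ℤ) n h := by
  obtain ⟨q, hq⟩ := hdvd
  exact ⟨PowerSeries.coeff (R := ℤ) n q, by rw [hq, PowerSeries.coeff_C_mul]⟩

lemma key (p : ℕ) (hp : p.Prime) (k t : ℕ) (hk : 1 ≤ k) (g : PowerSeries ℤ) (n : ℕ) :
    (p : ℤ) ^ k ∣ PowerSeries.coeff (R := ℤ) n (g ^ (p ^ k * t))
      - PowerSeries.coeff (R := ℤ) n ((E p g) ^ (p ^ (k - 1) * t)) := by
  have h1 : ((p : ℕ) : PowerSeries ℤ) ∣ g ^ p - E p g := by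
    rw [← map_natCast (PowerSeries.C (R := ℤ))]
    exact C_dvd_of_dvd_coeff _ _ (dvd_coeff_pow_sub_E p hp g)
  have h2 := dvd_sub_pow_of_dvd_sub h1 (k - 1)
  have hkk : k - 1 + 1 = k := by omega
  rw [hkk] at h2
  have h4 := sub_dvd_pow_sub_pow ((g ^ p) ^ p ^ (k - 1)) ((E p g) ^ p ^ (k - 1)) t
  have h5 := dvd_trans h2 h4
  have hexp : p * p ^ (k - 1) = p ^ k := by
    rw [← pow_succ', hkk]
  rw [← pow_mul, ← pow_mul, ← pow_mul] at h5
  rw [show p * (p ^ (k - 1) * t) = p ^ k * t by rw [← mul_assoc, hexp]] at h5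
  have h6 : (PowerSeries.C (R := ℤ) ((p : ℤ) ^ k)) ∣
      g ^ (p ^ k * t) - (E p g) ^ (p ^ (k - 1) * t) := by
    have : (PowerSeries.C (R := ℤ) ((p : ℤ) ^ k)) = ((p : ℕ) : PowerSeries ℤ) ^ k := by
      rw [map_pow, map_natCast (PowerSeries.C (R := ℤ))]
    rw [this]
    exact h5
  have := dvd_coeff_of_C_dvd _ _ h6 n
  rwa [map_sub] at this

end CoeffHAux

open CoeffHAux

/-- Let `f(z) = Σ_{j ≥ 1} a(j)·z^j` be a formal power series with integer coefficients
and zero constant term, and for `e ≥ 1` let `fsub e` denote `f(z^e)`. Then for every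
`r ≥ 1`, all coefficients of `H^{(r)}(z) = (1/r)·Σ_{e | r} μ(e)·f(z^e)^{r/e}` are
integers. -/
theorem coeff_H_isInt (a : ℕ → ℤ) (ha0 : a 0 = 0)
    (fsub : ℕ → PowerSeries ℚ)
    (hfsub : ∀ e : ℕ, fsub e =
      PowerSeries.mk (fun i : ℕ => if e ∣ i then (a (i / e) : ℚ) else 0))
    (r : ℕ) (hr : 1 ≤ r)
    (H : PowerSeries ℚ)
    (hH : H = (1 / (r : ℚ)) •
      ∑ e ∈ r.divisors, (ArithmeticFunction.moebius e : ℚ) • (fsub e) ^ (r / e)) :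
    ∀ j : ℕ, ∃ k : ℤ, PowerSeries.coeff (R := ℚ) j H = (k : ℚ) := by
  classical
  intro j
  have hr0 : r ≠ 0 := by omega
  set F : ℕ → PowerSeries ℤ :=
    fun e => PowerSeries.mk fun i => if e ∣ i then a (i / e) else 0 with hF
  have hmap : ∀ e, fsub e = PowerSeries.map (Int.castRingHom ℚ) (F e) := by
    intro e
    rw [hfsub]
    ext n
    simp only [PowerSeries.coeff_map, hF, PowerSeries.coeff_mk,
      apply_ite (Int.castRingHom ℚ), map_zero]
    rfl
  set x : ℕ → ℤ := fun e => PowerSeries.coeff (R := ℤ) j ((F e) ^ (r / e)) with hx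
  set S : ℤ := ∑ e ∈ r.divisors, (ArithmeticFunction.moebius e) * x e with hSdef
  -- per-prime divisibility
  have hprime : ∀ p ∈ r.primeFactors, ((p : ℤ) ^ (r.factorization p)) ∣ S := by
    intro p hpmem
    have hpp : p.Prime := Nat.prime_of_mem_primeFactors hpmem
    have hp0 : p ≠ 0 := hpp.ne_zero
    set k := r.factorization p with hk
    have hk1 : 1 ≤ k := hpp.factorization_pos_of_dvd hr0 (Nat.dvd_of_mem_primeFactors hpmem)
    set s := r / p ^ k with hs
    have hps : ¬ p ∣ s := Nat.not_dvd_ordCompl hpp hr0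
    have hrs : p ^ k * s = r := Nat.ordProj_mul_ordCompl_eq_self r p
    have hsr : s ∣ r := Nat.ordCompl_dvd r p
    have hs0 : s ≠ 0 := fun h => hr0 (by rw [← hrs, h, mul_zero])
    -- split the sum
    have hsplit := Finset.sum_filter_add_sum_filter_not r.divisors (fun e => p ∣ e)
      (fun e => (ArithmeticFunction.moebius e) * x e)
    have h_not : r.divisors.filter (fun e => ¬ p ∣ e) = s.divisors := by
      ext e
      simp only [Finset.mem_filter, Nat.mem_divisors]
      constructor
      · rintro ⟨⟨her, -⟩, hpe⟩
        refine ⟨?_, hs0⟩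
        have hcop : Nat.Coprime e (p ^ k) :=
          (Nat.Coprime.pow_left k ((hpp.coprime_iff_not_dvd).mpr hpe)).symm
        have : e ∣ s * p ^ k := by rw [mul_comm, hrs]; exact her
        exact hcop.dvd_of_dvd_mul_right this
      · rintro ⟨hes, -⟩
        exact ⟨⟨hes.trans hsr, hr0⟩, fun h => hps (h.trans hes)⟩
    have himage : (s.divisors.image (fun d => p * d)) ⊆
        r.divisors.filter (fun e => p ∣ e) := by
      intro e he
      obtain ⟨d, hd, rfl⟩ := Finset.mem_image.mp he
      rw [Nat.mem_divisors] at hd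
      refine Finset.mem_filter.mpr ⟨Nat.mem_divisors.mpr ⟨?_, hr0⟩, ⟨d, rfl⟩⟩
      rw [← hrs]
      exact mul_dvd_mul (dvd_pow_self p (by omega)) hd.1
    have hzero : ∀ e ∈ r.divisors.filter (fun e => p ∣ e),
        e ∉ s.divisors.image (fun d => p * d) →
        (ArithmeticFunction.moebius e) * x e = 0 := by
      intro e he hnot
      rw [Finset.mem_filter, Nat.mem_divisors] at he
      obtain ⟨⟨her, -⟩, m, rfl⟩ := he
      by_cases hpm : p ∣ m
      · rw [ArithmeticFunction.moebius_eq_zero_of_not_squarefree, zero_mul]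
        intro hsq
        obtain ⟨c, hc⟩ := hpm
        have hppm : p * p ∣ p * m := ⟨c, by rw [hc, mul_assoc]⟩
        exact hpp.not_isUnit (hsq p hppm)
      · exfalso
        apply hnot
        have hm : m ∣ s := by
          have hmr : m ∣ r := (Dvd.intro_left p rfl).trans her
          have hcop : Nat.Coprime m (p ^ k) :=
            (Nat.Coprime.pow_left k ((hpp.coprime_iff_not_dvd).mpr hpm)).symm
          have : m ∣ s * p ^ k := by rw [mul_comm, hrs]; exact hmr
          exact hcop.dvd_of_dvd_mul_right this
        exact Finset.mem_image.mpr ⟨m, Nat.mem_divisors.mpr ⟨hm, hs0⟩, rfl⟩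
    have h_yes : ∑ e ∈ r.divisors.filter (fun e => p ∣ e),
        (ArithmeticFunction.moebius e) * x e
        = ∑ d ∈ s.divisors, (ArithmeticFunction.moebius (p * d)) * x (p * d) := by
      rw [← Finset.sum_subset himage hzero]
      rw [Finset.sum_image]
      intro d₁ h₁ d₂ h₂ h
      exact Nat.eq_of_mul_eq_mul_left (Nat.pos_of_ne_zero hp0) h
    have hS_eq : S = ∑ d ∈ s.divisors,
        ((ArithmeticFunction.moebius (p * d)) * x (p * d)
          + (ArithmeticFunction.moebius d) * x d) := by
      rw [hSdef, ← hsplit, h_yes, h_not, ← Finset.sum_add_distrib]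
    rw [hS_eq]
    refine Finset.dvd_sum ?_
    intro d hd
    rw [Nat.mem_divisors] at hd
    obtain ⟨⟨m, hm⟩, -⟩ := hd
    have hd0 : d ≠ 0 := fun h => hs0 (by rw [hm, h, zero_mul])
    have hpd : ¬ p ∣ d := fun h => hps (h.trans ⟨m, hm⟩)
    have hcop : Nat.Coprime p d := (hpp.coprime_iff_not_dvd).mpr hpd
    have hmu : ArithmeticFunction.moebius (p * d) = - ArithmeticFunction.moebius d := by
      rw [ArithmeticFunction.isMultiplicative_moebius.map_mul_of_coprime hcop,
        ArithmeticFunction.moebius_apply_prime hpp, neg_one_mul]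
    have hterm : (ArithmeticFunction.moebius (p * d)) * x (p * d)
        + (ArithmeticFunction.moebius d) * x d
        = (ArithmeticFunction.moebius d) * (x d - x (p * d)) := by
      rw [hmu]; ring
    rw [hterm]
    refine Dvd.dvd.mul_left ?_ _
    -- the key congruence
    have hrd : r / d = p ^ k * m := by
      rw [← hrs, hm, ← mul_assoc, mul_comm (p ^ k) d, mul_assoc,
        Nat.mul_div_cancel_left _ (Nat.pos_of_ne_zero hd0)]
    have hrpd : r / (p * d) = p ^ (k - 1) * m := by
      have : r = (p * d) * (p ^ (k - 1) * m) := by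
        rw [← hrs, hm]
        have : p * p ^ (k - 1) = p ^ k := by
          rw [← pow_succ']; congr 1; omega
        calc p ^ k * (d * m) = (p * p ^ (k - 1)) * (d * m) := by rw [this]
          _ = (p * d) * (p ^ (k - 1) * m) := by ring
      rw [this, Nat.mul_div_cancel_left]
      positivity
    have hEF : E p (F d) = F (p * d) := by
      ext n
      simp only [coeff_E, hF, PowerSeries.coeff_mk]
      by_cases hpn : p ∣ n
      · rw [if_pos hpn]
        by_cases hdn : d ∣ n / p
        · rw [if_pos hdn, if_pos ((Nat.dvd_div_iff_mul_dvd hpn).mp hdn),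
            Nat.div_div_eq_div_mul]
        · rw [if_neg hdn, if_neg (fun h => hdn ((Nat.dvd_div_iff_mul_dvd hpn).mpr h))]
      · rw [if_neg hpn, if_neg (fun h => hpn ((dvd_mul_right p d).trans h))]
    have := key p hpp k m hk1 (F d) j
    rw [hEF] at this
    rw [hx]
    simp only [hrd, hrpd]
    exact this
  -- combine the primes
  have hrdvd : (r : ℤ) ∣ S := by
    have hfact : (r : ℤ) = ∏ p ∈ r.primeFactors, ((p : ℤ) ^ (r.factorization p)) := by
      conv_lhs => rw [← Nat.factorization_prod_pow_eq_self hr0]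
      rw [Finsupp.prod, Nat.support_factorization]
      push_cast
      rfl
    rw [hfact]
    refine Finset.prod_dvd_of_coprime ?_ hprime
    intro p hp q hq hne
    have hpp : p.Prime := Nat.prime_of_mem_primeFactors hp
    have hqq : q.Prime := Nat.prime_of_mem_primeFactors hq
    exact (Nat.isCoprime_iff_coprime.mpr ((Nat.coprime_primes hpp hqq).mpr hne)).pow
  obtain ⟨c, hc⟩ := hrdvd
  refine ⟨c, ?_⟩
  have hcoeffsum : PowerSeries.coeff (R := ℚ) j
      (∑ e ∈ r.divisors, (ArithmeticFunction.moebius e : ℚ) • (fsub e) ^ (r / e))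
      = (S : ℚ) := by
    rw [map_sum, hSdef]
    push_cast
    refine Finset.sum_congr rfl ?_
    intro e he
    rw [map_smul, smul_eq_mul, hmap, ← map_pow, PowerSeries.coeff_map, hx]
    rfl
  rw [hH, map_smul, hcoeffsum, smul_eq_mul, hc]
  push_cast
  rw [one_div, ← mul_assoc, inv_mul_cancel₀ (by exact_mod_cast Nat.cast_ne_zero.mpr hr0),
    one_mul]
end
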